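/- arXiv:2103.08911 — 11 statements merged into one kernel-verified Lean document; each statement's English description precedes it below -/
import Mathlib

section
/- Let G be a connected graph with a cut-vertex v. Let R be a subset of V(G) such that at least two connected components of G - v contain elements of R. If d(v,x) ≠ d(v,y) for some vertices x, y of G, then there exists r ∈ R with r ≠ v such that d(r,x) ≠ d(r,y). -/
open SimpleGraph

lemma walk_reach_induce {V : Type*} (G : SimpleGraph V) (v : V) :
    ∀ {a b : V} (p : G.Walk a b), v ∉ p.support → ∀ (ha : a ≠ v) (hb : b ≠ v),
      (G.induce {u | u ≠ v}).Reachable ⟨a, ha⟩ ⟨b, hb⟩ := by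
  intro a b p
  induction p with
  | nil => intro _ ha hb; rfl
  | @cons a c b hadj q ih =>
    intro hv ha hb
    simp only [SimpleGraph.Walk.support_cons, List.mem_cons] at hv
    push_neg at hv
    have hc : c ≠ v := fun h => hv.2 (h ▸ q.start_mem_support)
    have h1 : (G.induce {u | u ≠ v}).Adj ⟨a, ha⟩ ⟨c, hc⟩ := by
      simp [hadj]
    exact (h1.reachable).trans (ih hv.2 hc hb)

lemma dist_split {V : Type*} (G : SimpleGraph V) (hG : G.Connected) (v : V) {u w : V}
    (hu : u ≠ v)
    (h : ∀ (hw : w ≠ v), ¬ (G.induce {u | u ≠ v}).Reachable ⟨u, hu⟩ ⟨w, hw⟩) :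
    G.dist u w = G.dist u v + G.dist v w := by
  by_cases hw : w = v
  · subst hw; simp [dist_self]
  · classical
    refine le_antisymm (hG.dist_triangle) ?_
    obtain ⟨p, hp⟩ := hG.exists_walk_length_eq_dist u w
    have hv : v ∈ p.support := by
      by_contra hvp
      exact h hw (walk_reach_induce G v p hvp hu hw)
    calc G.dist u v + G.dist v w
        ≤ (p.takeUntil v hv).length + (p.dropUntil v hv).length :=
          Nat.add_le_add (dist_le _) (dist_le _)
      _ = p.length := by rw [← SimpleGraph.Walk.length_append, p.take_spec hv]
      _ = G.dist u w := hp

def IsResolving {V : Type*} (G : SimpleGraph V) (R : Set V) : Prop :=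
  ∀ x y : V, x ≠ y → ∃ r ∈ R, G.dist r x ≠ G.dist r y

noncomputable def metricDim {V : Type*} (G : SimpleGraph V) : ℕ :=
  sInf {n | ∃ R : Set V, IsResolving G R ∧ R.ncard = n}

def IsMetricBasis {V : Type*} (G : SimpleGraph V) (R : Set V) : Prop :=
  IsResolving G R ∧ R.ncard = metricDim G

def IsBasisForced {V : Type*} (G : SimpleGraph V) (v : V) : Prop :=
  ∀ R : Set V, IsMetricBasis G R → v ∈ R

theorem stmt0 {V : Type*} [Fintype V] (G : SimpleGraph V) (hG : G.Connected) (v : V)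
    (hcut : ¬ (G.induce {u | u ≠ v}).Connected)
    (R : Set V)
    (hR2 : ∃ r₁ r₂ : {u : V | u ≠ v}, (r₁ : V) ∈ R ∧ (r₂ : V) ∈ R ∧
      ¬ (G.induce {u | u ≠ v}).Reachable r₁ r₂)
    (x y : V) (hxy : G.dist v x ≠ G.dist v y) :
    ∃ r ∈ R, r ≠ v ∧ G.dist r x ≠ G.dist r y := by
  obtain ⟨⟨r₁, hr₁v⟩, ⟨r₂, hr₂v⟩, hr₁R, hr₂R, hsep⟩ := hR2
  simp only [Set.mem_setOf_eq] at hr₁v hr₂v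
  -- P i z : z is "separated from rᵢ by v"
  set H := G.induce {u | u ≠ v}
  have key : ∀ z : V, (∀ hz : z ≠ v, ¬ H.Reachable ⟨r₁, hr₁v⟩ ⟨z, hz⟩) ∨
      (∀ hz : z ≠ v, ¬ H.Reachable ⟨r₂, hr₂v⟩ ⟨z, hz⟩) := by
    intro z
    by_cases hz : z = v
    · left; intro hz'; exact absurd hz hz'
    · by_cases h1 : H.Reachable ⟨r₁, hr₁v⟩ ⟨z, hz⟩
      · right; intro hz'
        intro h2
        exact hsep (h1.trans h2.symm)
      · left; intro hz'
        have : hz' = hz := rfl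
        exact this ▸ h1
  have d1 : ∀ z : V, (∀ hz : z ≠ v, ¬ H.Reachable ⟨r₁, hr₁v⟩ ⟨z, hz⟩) →
      G.dist r₁ z = G.dist r₁ v + G.dist v z := fun z h => dist_split G hG v hr₁v h
  have d2 : ∀ z : V, (∀ hz : z ≠ v, ¬ H.Reachable ⟨r₂, hr₂v⟩ ⟨z, hz⟩) →
      G.dist r₂ z = G.dist r₂ v + G.dist v z := fun z h => dist_split G hG v hr₂v h
  rcases key x with hx1 | hx2 <;> rcases key y with hy1 | hy2
  · exact ⟨r₁, hr₁R, hr₁v, by rw [d1 x hx1, d1 y hy1]; omega⟩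
  · -- x sep from r₁, y sep from r₂
    by_cases h1 : G.dist r₁ x ≠ G.dist r₁ y
    · exact ⟨r₁, hr₁R, hr₁v, h1⟩
    by_cases h2 : G.dist r₂ x ≠ G.dist r₂ y
    · exact ⟨r₂, hr₂R, hr₂v, h2⟩
    push_neg at h1 h2
    exfalso
    have e1 := d1 x hx1
    have e2 := d2 y hy2
    have t1 : G.dist r₁ y ≤ G.dist r₁ v + G.dist v y := hG.dist_triangle
    have t2 : G.dist r₂ x ≤ G.dist r₂ v + G.dist v x := hG.dist_triangle
    omega
  · -- y sep from r₁, x sep from r₂ : symmetric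
    by_cases h1 : G.dist r₁ x ≠ G.dist r₁ y
    · exact ⟨r₁, hr₁R, hr₁v, h1⟩
    by_cases h2 : G.dist r₂ x ≠ G.dist r₂ y
    · exact ⟨r₂, hr₂R, hr₂v, h2⟩
    push_neg at h1 h2
    exfalso
    have e1 := d1 y hy1
    have e2 := d2 x hx2
    have t1 : G.dist r₁ x ≤ G.dist r₁ v + G.dist v x := hG.dist_triangle
    have t2 : G.dist r₂ y ≤ G.dist r₂ v + G.dist v y := hG.dist_triangle
    omega
  · exact ⟨r₂, hr₂R, hr₂v, by rw [d2 x hx2, d2 y hy2]; omega⟩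
end

section
/- Let v be a cut-vertex of a connected graph G, and let R be a resolving set of G. For any connected component G_i of G - v, if V(G_i) ∩ R = ∅ then the subgraph of G induced by V(G_i) ∪ {v} is isomorphic to a path P_n for some n ≥ 2. Moreover, there is at most one connected component G_i of G - v satisfying V(G_i) ∩ R = ∅. -/
open SimpleGraph

/-!
Let `C` be a component of `G - v` containing no vertex of `R`. Every shortest walk from a vertex
`r ∉ C` to a vertex `u ∈ C` passes through `v`, so `d(r, u) = d(r, v) + d(v, u)`; hence vertices
of `C ∪ {v}` at the same distance from `v` cannot be told apart by `R`, i.e. `d(v, ·)` is injective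
on `C ∪ {v}`. A geodesic from `v` to a vertex of `C` farthest from `v` stays in `C ∪ {v}` and meets
every distance value, so it visits all of `C ∪ {v}`, and geodesics induce paths. Two such
components would contain two neighbours of `v` with the same distance to every vertex of `R`.
-/

namespace SimpleGraph

variable {V : Type*} {G : SimpleGraph V}

namespace Walk

lemma dist_getVert_of_length_eq_dist {u w : V} (p : G.Walk u w) (hp : p.length = G.dist u w)
    {i : ℕ} (hi : i ≤ p.length) : G.dist u (p.getVert i) = i := by
  rw [← length_eq_dist_of_subwalk hp (p.isSubwalk_take i), take_length]
  omega

/-- A geodesic has no chords. -/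
lemma induce_support_iso_pathGraph_of_length_eq_dist {u w : V} (p : G.Walk u w)
    (hp : p.length = G.dist u w) :
    Nonempty (G.induce {x | x ∈ p.support} ≃g pathGraph (p.length + 1)) := by
  have hdist (i : Fin (p.length + 1)) : G.dist u (p.getVert i) = i :=
    p.dist_getVert_of_length_eq_dist hp (by omega)
  let f (i : Fin (p.length + 1)) : {x | x ∈ p.support} :=
    ⟨p.getVert i, p.getVert_mem_support i⟩
  have hf : Function.Bijective f := by
    refine ⟨fun i j hij => Fin.ext ?_, fun ⟨x, hx⟩ => ?_⟩
    · rw [← hdist i, ← hdist j]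
      exact congrArg (fun y : {x | x ∈ p.support} => G.dist u y) hij
    · obtain ⟨i, rfl, hi⟩ := mem_support_iff_exists_getVert.mp hx
      exact ⟨⟨i, by omega⟩, rfl⟩
  refine ⟨(RelIso.mk (Equiv.ofBijective f hf) ?_).symm⟩
  intro i j
  simp only [Equiv.ofBijective_apply, comap_adj, Function.Embedding.subtype_apply, pathGraph_adj, f]
  constructor
  · intro hadj
    have hne : (i : ℕ) ≠ j := fun h => hadj.ne (by rw [Fin.ext h])
    have := hadj.diff_dist_adj (u := u)
    rw [hdist, hdist] at this
    omega
  · rintro (h | h)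
    · exact h ▸ p.adj_getVert_succ (by omega)
    · exact (h ▸ p.adj_getVert_succ (by omega)).symm

end Walk

section CutVertex

variable {v : V} {C : (G.induce {u | u ≠ v}).ConnectedComponent}

lemma Walk.mem_image_supp_of_notMem_support {x u : V} (p : G.Walk x u) (hv : v ∉ p.support)
    (hu : u ∈ Subtype.val '' C.supp) : x ∈ Subtype.val '' C.supp := by
  obtain ⟨u', hu', rfl⟩ := hu
  have hS : ∀ y ∈ p.support, y ∈ {u | u ≠ v} := fun y hy hyv => hv (hyv ▸ hy)
  refine ⟨⟨x, hS x p.start_mem_support⟩, ?_, rfl⟩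
  rw [ConnectedComponent.mem_supp_iff] at hu' ⊢
  rw [← hu']
  exact ConnectedComponent.sound (p.induce _ hS).reachable

lemma Walk.IsPath.mem_image_supp_union_of_mem_support {u : V} {p : G.Walk v u} (hp : p.IsPath)
    (hu : u ∈ Subtype.val '' C.supp) {x : V} (hx : x ∈ p.support) :
    x ∈ Subtype.val '' C.supp ∪ {v} := by
  classical
  by_cases hxv : x = v
  · exact Or.inr hxv
  have hnil : ¬p.Nil := fun h => hxv (by simpa [Walk.nil_iff_support_eq.mp h] using hx)
  have hsupp := Walk.cons_support_tail hnil
  have hx' : x ∈ p.tail.support := (List.mem_cons.mp (hsupp ▸ hx)).resolve_left hxv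
  have hv : v ∉ p.tail.support := (List.nodup_cons.mp (hsupp ▸ hp.support_nodup)).1
  exact Or.inl <| (p.tail.dropUntil x hx').mem_image_supp_of_notMem_support
    (fun h => hv (p.tail.support_dropUntil_subset_support hx' h)) hu

lemma Connected.dist_eq_dist_add_dist (hG : G.Connected) {u r : V}
    (hu : u ∈ Subtype.val '' C.supp) (hr : r ∉ Subtype.val '' C.supp) :
    G.dist r u = G.dist r v + G.dist v u := by
  classical
  obtain ⟨p, hp⟩ := hG.exists_walk_length_eq_dist r u
  have hv : v ∈ p.support := by
    by_contra hv
    exact hr (p.mem_image_supp_of_notMem_support hv hu)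
  refine le_antisymm hG.dist_triangle ?_
  calc G.dist r v + G.dist v u
      ≤ (p.takeUntil v hv).length + (p.dropUntil v hv).length :=
        Nat.add_le_add (dist_le _) (dist_le _)
    _ = G.dist r u := by rw [← Walk.length_append, Walk.take_spec, hp]

lemma Connected.exists_adj_mem_image_supp (hG : G.Connected)
    (C : (G.induce {u | u ≠ v}).ConnectedComponent) :
    ∃ u ∈ Subtype.val '' C.supp, G.Adj v u := by
  obtain ⟨u, hu⟩ := C.nonempty_supp
  obtain ⟨p, hp, -⟩ := hG.exists_path_of_dist v u
  have hnil : ¬p.Nil := fun h => u.2 h.eq.symm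
  refine ⟨p.snd, ?_, p.adj_snd hnil⟩
  rcases hp.mem_image_supp_union_of_mem_support ⟨u, hu, rfl⟩ (p.getVert_mem_support 1) with h | h
  · exact h
  · exact absurd h.symm (p.adj_snd hnil).ne

lemma notMem_image_supp_of_mem {R : Set V} (hC : ∀ u ∈ C.supp, (u : V) ∉ R) {r : V}
    (hr : r ∈ R) : r ∉ Subtype.val '' C.supp := by
  rintro ⟨r', hr', rfl⟩
  exact hC r' hr' hr

lemma Connected.injOn_dist_of_isResolving (hG : G.Connected) {R : Set V} (hR : IsResolving G R)
    (hC : ∀ u ∈ C.supp, (u : V) ∉ R) :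
    Set.InjOn (G.dist v) (Subtype.val '' C.supp ∪ {v}) := by
  intro a ha b hb hab
  by_contra hne
  obtain ⟨r, hrR, hr⟩ := hR a b hne
  have key : ∀ x ∈ Subtype.val '' C.supp ∪ {v}, G.dist r x = G.dist r v + G.dist v x := by
    rintro x (hx | rfl)
    · exact hG.dist_eq_dist_add_dist hx (notMem_image_supp_of_mem hC hrR)
    · simp
  exact hr (by rw [key a ha, key b hb, hab])

theorem Connected.induce_image_supp_union_iso_pathGraph [Finite V] (hG : G.Connected)
    (hinj : Set.InjOn (G.dist v) (Subtype.val '' C.supp ∪ {v})) :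
    ∃ n, 2 ≤ n ∧ Nonempty (G.induce (Subtype.val '' C.supp ∪ {v}) ≃g pathGraph n) := by
  obtain ⟨u, hu, hmax⟩ := Set.exists_max_image (Subtype.val '' C.supp) (G.dist v)
    (Set.toFinite _) (C.nonempty_supp.image _)
  obtain ⟨p, hp, hlen⟩ := hG.exists_path_of_dist v u
  have hsupp : Subtype.val '' C.supp ∪ {v} = {x | x ∈ p.support} := by
    ext x
    refine ⟨fun hx => ?_, hp.mem_image_supp_union_of_mem_support hu⟩
    have hle : G.dist v x ≤ p.length := by
      rcases hx with hx | rfl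
      · exact hlen ▸ hmax x hx
      · simp
    have hget := p.getVert_mem_support (G.dist v x)
    rw [← hinj (hp.mem_image_supp_union_of_mem_support hu hget) hx
      (p.dist_getVert_of_length_eq_dist hlen hle)]
    exact hget
  have hpos : 0 < p.length := by
    obtain ⟨u', -, rfl⟩ := hu
    exact hlen ▸ hG.pos_dist_of_ne (Ne.symm u'.2)
  rw [hsupp]
  exact ⟨p.length + 1, by omega, p.induce_support_iso_pathGraph_of_length_eq_dist hlen⟩

theorem ConnectedComponent.eq_of_isResolving (hG : G.Connected) {R : Set V}
    (hR : IsResolving G R) {C₁ C₂ : (G.induce {u | u ≠ v}).ConnectedComponent}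
    (h₁ : ∀ u ∈ C₁.supp, (u : V) ∉ R) (h₂ : ∀ u ∈ C₂.supp, (u : V) ∉ R) : C₁ = C₂ := by
  obtain ⟨u₁, hu₁, hadj₁⟩ := hG.exists_adj_mem_image_supp C₁
  obtain ⟨u₂, hu₂, hadj₂⟩ := hG.exists_adj_mem_image_supp C₂
  obtain rfl : u₁ = u₂ := by
    by_contra hne
    obtain ⟨r, hrR, hr⟩ := hR u₁ u₂ hne
    apply hr
    rw [hG.dist_eq_dist_add_dist hu₁ (notMem_image_supp_of_mem h₁ hrR),
      hG.dist_eq_dist_add_dist hu₂ (notMem_image_supp_of_mem h₂ hrR),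
      dist_eq_one_iff_adj.mpr hadj₁, dist_eq_one_iff_adj.mpr hadj₂]
  obtain ⟨a, ha, rfl⟩ := hu₁
  obtain ⟨b, hb, hab⟩ := hu₂
  rw [ConnectedComponent.mem_supp_iff] at ha hb
  rw [← ha, ← hb, Subtype.ext hab]

end CutVertex

end SimpleGraph

theorem stmt1_general {V : Type*} [Fintype V] (G : SimpleGraph V) (hG : G.Connected) (v : V)
    (R : Set V) (hR : IsResolving G R) :
    (∀ C : (G.induce {u | u ≠ v}).ConnectedComponent,
      (∀ u ∈ C.supp, (u : V) ∉ R) →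
      ∃ n : ℕ, 2 ≤ n ∧
        Nonempty ((G.induce ((Subtype.val '' C.supp) ∪ {v})) ≃g pathGraph n)) ∧
    (∀ C₁ C₂ : (G.induce {u | u ≠ v}).ConnectedComponent,
      (∀ u ∈ C₁.supp, (u : V) ∉ R) → (∀ u ∈ C₂.supp, (u : V) ∉ R) → C₁ = C₂) :=
  ⟨fun _ hC => hG.induce_image_supp_union_iso_pathGraph (hG.injOn_dist_of_isResolving hR hC),
    fun _ _ => ConnectedComponent.eq_of_isResolving hG hR⟩

theorem stmt1 {V : Type*} [Fintype V] (G : SimpleGraph V) (hG : G.Connected) (v : V)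
    (hcut : ¬ (G.induce {u | u ≠ v}).Connected)
    (R : Set V) (hR : IsResolving G R) :
    (∀ C : (G.induce {u | u ≠ v}).ConnectedComponent,
      (∀ u ∈ C.supp, (u : V) ∉ R) →
      ∃ n : ℕ, 2 ≤ n ∧
        Nonempty ((G.induce ((Subtype.val '' C.supp) ∪ {v})) ≃g pathGraph n)) ∧
    (∀ C₁ C₂ : (G.induce {u | u ≠ v}).ConnectedComponent,
      (∀ u ∈ C₁.supp, (u : V) ∉ R) → (∀ u ∈ C₂.supp, (u : V) ∉ R) → C₁ = C₂) :=
  stmt1_general G hG v R hR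
end

section
/- Let G be a connected graph and let v be a cut-vertex such that either G - v has at least three connected components, or G - v has exactly two connected components G_1, G_2 and for both i = 1, 2 the induced subgraph on V(G_i) ∪ {v} is not isomorphic to any path. Then v belongs to no metric basis of G, i.e., v is a void vertex. -/
open SimpleGraph

section Aux


variable {V : Type*} {G : SimpleGraph V} {v : V}

/-- A walk in `G` avoiding `v` gives reachability in `G.induce {u | u ≠ v}`. -/
lemma aux_walk_reach {x y : V} (p : G.Walk x y) (hp : v ∉ p.support)
    (hx : x ≠ v) (hy : y ≠ v) :
    (G.induce {u : V | u ≠ v}).Reachable ⟨x, hx⟩ ⟨y, hy⟩ := by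
  induction p with
  | nil => exact Reachable.refl _
  | @cons a b c hab q ih =>
    simp only [Walk.support_cons, List.mem_cons] at hp
    push_neg at hp
    have hbv : b ≠ v := fun h => hp.2 (h ▸ q.start_mem_support)
    have hadj : (G.induce {u : V | u ≠ v}).Adj ⟨a, hx⟩ ⟨b, hbv⟩ := by
      simpa using hab
    exact hadj.reachable.trans (ih hp.2 hbv hy)

lemma aux_not_mem_Sset (C : (G.induce {u : V | u ≠ v}).ConnectedComponent) :
    v ∉ Subtype.val '' C.supp := by
  rintro ⟨⟨z, hz⟩, _, h⟩
  exact hz h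

lemma aux_mem_Sset {z : V} (hz : z ≠ v)
    (C : (G.induce {u : V | u ≠ v}).ConnectedComponent) :
    z ∈ Subtype.val '' C.supp ↔
      (G.induce {u : V | u ≠ v}).connectedComponentMk ⟨z, hz⟩ = C := by
  constructor
  · rintro ⟨⟨w, hw⟩, hmem, rfl⟩
    exact (ConnectedComponent.mem_supp_iff _ _).mp hmem
  · intro h
    exact ⟨⟨z, hz⟩, (ConnectedComponent.mem_supp_iff _ _).mpr h, rfl⟩

lemma aux_disjoint {C₁ C₂ : (G.induce {u : V | u ≠ v}).ConnectedComponent}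
    (hne : C₁ ≠ C₂) {z : V} (hz : z ∈ Subtype.val '' C₁.supp) :
    z ∉ Subtype.val '' C₂.supp := by
  intro hz2
  obtain ⟨⟨w, hw⟩, hmem, rfl⟩ := hz
  exact hne (((aux_mem_Sset hw C₁).mp ⟨⟨w, hw⟩, hmem, rfl⟩).symm.trans
    ((aux_mem_Sset hw C₂).mp hz2))

/-- Adjacent vertices avoiding `v` are in the same component. -/
lemma aux_adj_mem {C : (G.induce {u : V | u ≠ v}).ConnectedComponent}
    {x z : V} (hx : x ∈ Subtype.val '' C.supp) (hz : z ≠ v) (hadj : G.Adj z x) :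
    z ∈ Subtype.val '' C.supp := by
  obtain ⟨⟨w, hw⟩, hmem, rfl⟩ := hx
  rw [aux_mem_Sset hz]
  rw [← (ConnectedComponent.mem_supp_iff _ _).mp hmem]
  exact ConnectedComponent.sound (by simpa using hadj : (G.induce {u : V | u ≠ v}).Adj ⟨z, hz⟩ ⟨w, hw⟩).reachable

/-- Distance expansion through the cut vertex. -/
lemma aux_expand (hG : G.Connected) {C : (G.induce {u : V | u ≠ v}).ConnectedComponent}
    {r z : V} (hr : r ∈ Subtype.val '' C.supp) (hz : z ∉ Subtype.val '' C.supp) :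
    G.dist r z = G.dist r v + G.dist v z := by
  classical
  have hrv : r ≠ v := by
    rintro rfl; exact aux_not_mem_Sset C hr
  refine le_antisymm hG.dist_triangle ?_
  obtain ⟨p, hp⟩ := hG.exists_walk_length_eq_dist r z
  have hv : v ∈ p.support := by
    by_contra hv
    have hzv : z ≠ v := by rintro rfl; exact hv p.end_mem_support
    have hreach := aux_walk_reach p hv hrv hzv
    obtain ⟨⟨w, hw⟩, hmem, rfl⟩ := hr
    exact hz ((aux_mem_Sset hzv C).mpr
      (((ConnectedComponent.sound hreach).symm).trans ((ConnectedComponent.mem_supp_iff _ _).mp hmem)))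
  have hsplit := congrArg Walk.length (p.take_spec hv)
  rw [Walk.length_append] at hsplit
  calc G.dist r v + G.dist v z
      ≤ (p.takeUntil v hv).length + (p.dropUntil v hv).length :=
        add_le_add (dist_le _) (dist_le _)
    _ = p.length := hsplit
    _ = G.dist r z := hp

/-- Every component contains a neighbour of `v`. -/
lemma aux_nbr (hG : G.Connected) (C : (G.induce {u : V | u ≠ v}).ConnectedComponent) :
    ∃ x ∈ Subtype.val '' C.supp, G.Adj v x := by
  obtain ⟨⟨a, ha⟩, hmk⟩ := C.exists_rep
  have key : ∀ {b c : V} (p : G.Walk b c), v ∈ p.support → ∀ (hb : b ≠ v),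
      ∃ x, ∃ hx : x ≠ v, G.Adj v x ∧
        (G.induce {u : V | u ≠ v}).Reachable ⟨b, hb⟩ ⟨x, hx⟩ := by
    intro b c p
    induction p with
    | nil =>
      intro hv hb
      simp only [Walk.support_nil, List.mem_singleton] at hv
      exact absurd hv.symm hb
    | @cons b c e hbc q ih =>
      intro hv hb
      by_cases hcv : c = v
      · subst hcv
        exact ⟨b, hb, hbc.symm, Reachable.refl _⟩
      · have hvq : v ∈ q.support := by
          simp only [Walk.support_cons, List.mem_cons] at hv
          rcases hv with h | h
          · exact absurd h.symm hb
          · exact h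
        obtain ⟨x, hx, hvx, hreach⟩ := ih hvq hcv
        have hadj : (G.induce {u : V | u ≠ v}).Adj ⟨b, hb⟩ ⟨c, hcv⟩ := by simpa using hbc
        exact ⟨x, hx, hvx, hadj.reachable.trans hreach⟩
  obtain ⟨p⟩ := hG.preconnected a v
  obtain ⟨x, hx, hvx, hreach⟩ := key p p.end_mem_support ha
  refine ⟨x, ?_, hvx⟩
  rw [aux_mem_Sset hx]
  exact (ConnectedComponent.sound hreach).symm.trans hmk

/-- On a connected graph, a vertex at distance `k+1` from `v` has a neighbour at distance `k`. -/
lemma aux_decr (hG : G.Connected) {y : V} {k : ℕ} (h : G.dist v y = k + 1) :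
    ∃ z, G.Adj z y ∧ G.dist v z = k := by
  obtain ⟨p, hp⟩ := hG.exists_walk_length_eq_dist v y
  rw [h] at hp
  rcases hq : p.reverse with _ | ⟨hadj, q⟩
  · have := congrArg Walk.length hq
    rw [Walk.length_reverse, hp] at this
    simp at this
  · rename_i b
    have hlen := congrArg Walk.length hq
    rw [Walk.length_reverse, hp, Walk.length_cons] at hlen
    refine ⟨b, hadj.symm, le_antisymm ?_ ?_⟩
    · have := dist_le q.reverse
      rw [Walk.length_reverse] at this
      omega
    · have h1 : G.dist v y ≤ G.dist v b + G.dist b y := hG.dist_triangle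
      have h2 : G.dist b y = 1 := dist_eq_one_iff_adj.mpr hadj.symm
      omega


lemma aux_path_iso [Fintype V] (hG : G.Connected)
    (D : (G.induce {u : V | u ≠ v}).ConnectedComponent)
    (hinj : ∀ x ∈ (Subtype.val '' D.supp ∪ {v} : Set V),
      ∀ y ∈ (Subtype.val '' D.supp ∪ {v} : Set V), G.dist v x = G.dist v y → x = y) :
    ∃ n : ℕ, Nonempty ((G.induce ((Subtype.val '' D.supp) ∪ {v})) ≃g pathGraph n) := by
  classical
  set S : Set V := Subtype.val '' D.supp ∪ {v} with hS
  have hvS : v ∈ S := Or.inr rfl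
  -- decrement stays in S
  have hclosed : ∀ x ∈ S, ∀ k : ℕ, G.dist v x = k + 1 →
      ∃ y ∈ S, G.Adj y x ∧ G.dist v y = k := by
    intro x hx k hk
    obtain ⟨z, hzx, hzd⟩ := aux_decr hG hk
    refine ⟨z, ?_, hzx, hzd⟩
    by_cases hzv : z = v
    · exact hzv ▸ hvS
    · have hxv : x ≠ v := by
        rintro rfl
        rw [SimpleGraph.dist_self] at hk
        omega
      have hxD : x ∈ Subtype.val '' D.supp := by
        rcases hx with h | h
        · exact h
        · exact absurd h hxv
      exact Or.inl (aux_adj_mem hxD hzv hzx)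
  -- all smaller distances are attained in S
  have hall : ∀ k : ℕ, ∀ x ∈ S, G.dist v x = k → ∀ j ≤ k, ∃ y ∈ S, G.dist v y = j := by
    intro k
    induction k with
    | zero =>
      intro x hx hk j hj
      interval_cases j
      exact ⟨x, hx, hk⟩
    | succ k ih =>
      intro x hx hk j hj
      rcases Nat.lt_or_ge j (k + 1) with h | h
      · obtain ⟨y, hyS, _, hyd⟩ := hclosed x hx k hk
        exact ih y hyS hyd j (by omega)
      · exact ⟨x, hx, by omega⟩
  haveI : Fintype ↥S := Fintype.ofFinite _
  set n := Fintype.card ↥S with hn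
  -- injective on the subtype
  have hinj' : Function.Injective (fun x : ↥S => G.dist v x.val) := by
    intro a b h
    exact Subtype.ext (hinj a.val a.2 b.val b.2 h)
  have hlt : ∀ x : ↥S, G.dist v x.val < n := by
    intro x
    have hsub : Finset.range (G.dist v x.val + 1) ⊆
        Finset.image (fun y : ↥S => G.dist v y.val) Finset.univ := by
      intro j hj
      rw [Finset.mem_range] at hj
      obtain ⟨y, hyS, hyd⟩ := hall (G.dist v x.val) x.val x.2 rfl j (by omega)
      exact Finset.mem_image.mpr ⟨⟨y, hyS⟩, Finset.mem_univ _, hyd⟩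
    have hcard := Finset.card_le_card hsub
    rw [Finset.card_range, Finset.card_image_of_injective _ hinj', Finset.card_univ] at hcard
    omega
  let f : ↥S → Fin n := fun x => ⟨G.dist v x.val, hlt x⟩
  have hfinj : Function.Injective f := by
    intro a b h
    exact hinj' (congrArg Fin.val h)
  have hbij : Function.Bijective f :=
    (Fintype.bijective_iff_injective_and_card f).mpr ⟨hfinj, by rw [Fintype.card_fin]⟩
  -- adjacency characterization
  have hadj_iff : ∀ a b : ↥S, G.Adj a.val b.val ↔
      (G.dist v a.val + 1 = G.dist v b.val ∨ G.dist v b.val + 1 = G.dist v a.val) := by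
    intro a b
    constructor
    · intro h
      have hne : G.dist v a.val ≠ G.dist v b.val := by
        intro he
        exact h.ne (hinj a.val a.2 b.val b.2 he)
      have h1 : G.dist v b.val ≤ G.dist v a.val + 1 := by
        have := hG.dist_triangle (u := v) (v := a.val) (w := b.val)
        have h2 : G.dist a.val b.val = 1 := dist_eq_one_iff_adj.mpr h
        omega
      have h2 : G.dist v a.val ≤ G.dist v b.val + 1 := by
        have := hG.dist_triangle (u := v) (v := b.val) (w := a.val)
        have h2 : G.dist b.val a.val = 1 := dist_eq_one_iff_adj.mpr h.symm
        omega
      omega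
    · intro h
      rcases h with h | h
      · obtain ⟨y, hyS, hyadj, hyd⟩ := hclosed b.val b.2 (G.dist v a.val) h.symm
        have : y = a.val := hinj y hyS a.val a.2 (by omega)
        exact this ▸ hyadj
      · obtain ⟨y, hyS, hyadj, hyd⟩ := hclosed a.val a.2 (G.dist v b.val) h.symm
        have : y = b.val := hinj y hyS b.val b.2 (by omega)
        exact (this ▸ hyadj).symm
  refine ⟨n, ⟨⟨Equiv.ofBijective f hbij, ?_⟩⟩⟩
  intro a b
  show (pathGraph n).Adj (f a) (f b) ↔ (G.induce S).Adj a b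
  rw [pathGraph_adj]
  have : (G.induce S).Adj a b ↔ G.Adj a.val b.val := by simp [induce]
  rw [this, hadj_iff a b]

lemma aux_cross (hG : G.Connected)
    {C₁ C₂ : (G.induce {u : V | u ≠ v}).ConnectedComponent} (hne : C₁ ≠ C₂)
    {r₁ r₂ x y : V} (hr₁ : r₁ ∈ Subtype.val '' C₁.supp) (hr₂ : r₂ ∈ Subtype.val '' C₂.supp)
    (hx : x ∈ Subtype.val '' C₁.supp) (hy : y ∈ Subtype.val '' C₂.supp)
    (h1 : G.dist r₁ x = G.dist r₁ y) (h2 : G.dist r₂ x = G.dist r₂ y) :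
    G.dist v x = G.dist v y := by
  have hyn1 : y ∉ Subtype.val '' C₁.supp := aux_disjoint hne.symm hy
  have hxn2 : x ∉ Subtype.val '' C₂.supp := aux_disjoint hne hx
  have e1 : G.dist r₁ y = G.dist r₁ v + G.dist v y := aux_expand hG hr₁ hyn1
  have e2 : G.dist r₂ x = G.dist r₂ v + G.dist v x := aux_expand hG hr₂ hxn2
  have t1 : G.dist r₁ x ≤ G.dist r₁ v + G.dist v x := hG.dist_triangle
  have t2 : G.dist r₂ y ≤ G.dist r₂ v + G.dist v y := hG.dist_triangle
  omega


end Aux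

theorem stmt2 {V : Type*} [Fintype V] (G : SimpleGraph V) (hG : G.Connected) (v : V)
    (hcut : ¬ (G.induce {u | u ≠ v}).Connected)
    (hcond : 3 ≤ Nat.card (G.induce {u | u ≠ v}).ConnectedComponent ∨
      (Nat.card (G.induce {u | u ≠ v}).ConnectedComponent = 2 ∧
        ∀ C : (G.induce {u | u ≠ v}).ConnectedComponent, ∀ n : ℕ,
          ¬ Nonempty ((G.induce ((Subtype.val '' C.supp) ∪ {v})) ≃g pathGraph n))) :
    ∀ R : Set V, IsMetricBasis G R → v ∉ R := by
  classical
  intro R hR hvR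
  obtain ⟨hres, hcardR⟩ := hR
  by_cases hsplit : ∃ C₁ C₂ : (G.induce {u : V | u ≠ v}).ConnectedComponent, C₁ ≠ C₂ ∧
      (∃ r ∈ R, r ≠ v ∧ r ∈ Subtype.val '' C₁.supp) ∧
      (∃ r ∈ R, r ≠ v ∧ r ∈ Subtype.val '' C₂.supp)
  · obtain ⟨C₁, C₂, hne, ⟨r₁, hr₁R, hr₁v, hr₁C⟩, ⟨r₂, hr₂R, hr₂v, hr₂C⟩⟩ := hsplit
    have hres' : IsResolving G (R \ {v}) := by
      intro x y hxy
      by_contra hcon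
      push_neg at hcon
      have hcon' : ∀ r ∈ R, r ≠ v → G.dist r x = G.dist r y := by
        intro r hr hrv
        exact hcon r ⟨hr, hrv⟩
      have h1 := hcon' r₁ hr₁R hr₁v
      have h2 := hcon' r₂ hr₂R hr₂v
      have hvd : G.dist v x = G.dist v y := by
        by_cases hx1 : x ∈ Subtype.val '' C₁.supp
        · by_cases hy2 : y ∈ Subtype.val '' C₂.supp
          · exact aux_cross hG hne hr₁C hr₂C hx1 hy2 h1 h2
          · have hx2 : x ∉ Subtype.val '' C₂.supp := aux_disjoint hne hx1
            rw [aux_expand hG hr₂C hx2, aux_expand hG hr₂C hy2] at h2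
            omega
        · by_cases hy1 : y ∈ Subtype.val '' C₁.supp
          · by_cases hx2 : x ∈ Subtype.val '' C₂.supp
            · exact (aux_cross hG hne hr₁C hr₂C hy1 hx2 h1.symm h2.symm).symm
            · rw [aux_expand hG hr₂C hx2,
                aux_expand hG hr₂C (aux_disjoint hne hy1)] at h2
              omega
          · rw [aux_expand hG hr₁C hx1, aux_expand hG hr₁C hy1] at h1
            omega
      obtain ⟨r, hrR, hrd⟩ := hres x y hxy
      by_cases hrv : r = v
      · exact hrd (hrv ▸ hvd)
      · exact hrd (hcon' r hrR hrv)
    have hcard : (R \ {v}).ncard = R.ncard - 1 := Set.ncard_diff_singleton_of_mem hvR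
    have hle : metricDim G ≤ R.ncard - 1 := Nat.sInf_le ⟨R \ {v}, hres', hcard⟩
    have hpos : 0 < R.ncard := (Set.ncard_pos (Set.toFinite R)).mpr ⟨v, hvR⟩
    omega
  · have hfree_of_ne : ∀ D₀ : (G.induce {u : V | u ≠ v}).ConnectedComponent,
        (∃ r ∈ R, r ≠ v ∧ r ∈ Subtype.val '' D₀.supp) →
        ∀ C, C ≠ D₀ → ∀ r ∈ R, r ≠ v → r ∉ Subtype.val '' C.supp := by
      intro D₀ hD₀ C hC r hr hrv hrC
      exact hsplit ⟨C, D₀, hC, ⟨r, hr, hrv, hrC⟩, hD₀⟩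
    by_cases hfree2 : ∃ D₁ D₂ : (G.induce {u : V | u ≠ v}).ConnectedComponent, D₁ ≠ D₂ ∧
        (∀ r ∈ R, r ≠ v → r ∉ Subtype.val '' D₁.supp) ∧
        (∀ r ∈ R, r ≠ v → r ∉ Subtype.val '' D₂.supp)
    · obtain ⟨D₁, D₂, hne, hf₁, hf₂⟩ := hfree2
      obtain ⟨x, hxD, hvx⟩ := aux_nbr hG D₁
      obtain ⟨y, hyD, hvy⟩ := aux_nbr hG D₂
      have hxy : x ≠ y := fun h => aux_disjoint hne hxD (h ▸ hyD)
      obtain ⟨r, hrR, hrd⟩ := hres x y hxy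
      by_cases hrv : r = v
      · subst hrv
        rw [dist_eq_one_iff_adj.mpr hvx, dist_eq_one_iff_adj.mpr hvy] at hrd
        exact hrd rfl
      · have hrSS : r ∈ Subtype.val ''
            ((G.induce {u : V | u ≠ v}).connectedComponentMk ⟨r, hrv⟩).supp :=
          (aux_mem_Sset hrv _).mpr rfl
        have hCr1 : (G.induce {u : V | u ≠ v}).connectedComponentMk ⟨r, hrv⟩ ≠ D₁ :=
          fun h => hf₁ r hrR hrv (h ▸ hrSS)
        have hCr2 : (G.induce {u : V | u ≠ v}).connectedComponentMk ⟨r, hrv⟩ ≠ D₂ :=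
          fun h => hf₂ r hrR hrv (h ▸ hrSS)
        have hx' : x ∉ Subtype.val ''
            ((G.induce {u : V | u ≠ v}).connectedComponentMk ⟨r, hrv⟩).supp :=
          fun h => aux_disjoint hCr1 h hxD
        have hy' : y ∉ Subtype.val ''
            ((G.induce {u : V | u ≠ v}).connectedComponentMk ⟨r, hrv⟩).supp :=
          fun h => aux_disjoint hCr2 h hyD
        rw [aux_expand hG hrSS hx', aux_expand hG hrSS hy',
          dist_eq_one_iff_adj.mpr hvx, dist_eq_one_iff_adj.mpr hvy] at hrd
        exact hrd rfl
    · haveI : Fintype (G.induce {u : V | u ≠ v}).ConnectedComponent := Fintype.ofFinite _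
      have hcard2 : 2 ≤ Fintype.card (G.induce {u : V | u ≠ v}).ConnectedComponent := by
        rcases hcond with h | ⟨h, _⟩ <;> rw [Nat.card_eq_fintype_card] at h <;> omega
      by_cases hex : ∃ D₀ : (G.induce {u : V | u ≠ v}).ConnectedComponent,
          ∃ r ∈ R, r ≠ v ∧ r ∈ Subtype.val '' D₀.supp
      · obtain ⟨D₀, hD₀⟩ := hex
        have hnot3 : ¬ 3 ≤ Nat.card (G.induce {u : V | u ≠ v}).ConnectedComponent := by
          intro h3
          rw [Nat.card_eq_fintype_card] at h3
          have herase : 1 < (Finset.univ.erase D₀).card := by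
            rw [Finset.card_erase_of_mem (Finset.mem_univ _), Finset.card_univ]
            omega
          obtain ⟨a, ha, b, hb, hab⟩ := Finset.one_lt_card.mp herase
          exact hfree2 ⟨a, b, hab,
            hfree_of_ne D₀ hD₀ a (Finset.ne_of_mem_erase ha),
            hfree_of_ne D₀ hD₀ b (Finset.ne_of_mem_erase hb)⟩
        rcases hcond with h3 | ⟨hc2, hpath⟩
        · exact hnot3 h3
        obtain ⟨a, b, hab⟩ := Fintype.exists_pair_of_one_lt_card
          (α := (G.induce {u : V | u ≠ v}).ConnectedComponent) (by omega)
        have hDex : ∃ D : (G.induce {u : V | u ≠ v}).ConnectedComponent, D ≠ D₀ := by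
          by_cases h : a = D₀
          · exact ⟨b, fun hb => hab (h.trans hb.symm)⟩
          · exact ⟨a, h⟩
        obtain ⟨D, hDne⟩ := hDex
        have hDfree := hfree_of_ne D₀ hD₀ D hDne
        have hinj : ∀ x ∈ (Subtype.val '' D.supp ∪ {v} : Set V),
            ∀ y ∈ (Subtype.val '' D.supp ∪ {v} : Set V),
            G.dist v x = G.dist v y → x = y := by
          intro x hx y hy hd
          by_contra hxy
          obtain ⟨r, hrR, hrd⟩ := hres x y hxy
          by_cases hrv : r = v
          · exact hrd (hrv ▸ hd)
          · have hrSS : r ∈ Subtype.val ''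
                ((G.induce {u : V | u ≠ v}).connectedComponentMk ⟨r, hrv⟩).supp :=
              (aux_mem_Sset hrv _).mpr rfl
            have hCr : (G.induce {u : V | u ≠ v}).connectedComponentMk ⟨r, hrv⟩ ≠ D :=
              fun h => hDfree r hrR hrv (h ▸ hrSS)
            have hx' : x ∉ Subtype.val ''
                ((G.induce {u : V | u ≠ v}).connectedComponentMk ⟨r, hrv⟩).supp := by
              rcases hx with h | h
              · exact fun hc => aux_disjoint hCr hc h
              · rw [Set.mem_singleton_iff] at h
                subst h
                exact aux_not_mem_Sset _
            have hy' : y ∉ Subtype.val ''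
                ((G.induce {u : V | u ≠ v}).connectedComponentMk ⟨r, hrv⟩).supp := by
              rcases hy with h | h
              · exact fun hc => aux_disjoint hCr hc h
              · rw [Set.mem_singleton_iff] at h
                subst h
                exact aux_not_mem_Sset _
            rw [aux_expand hG hrSS hx', aux_expand hG hrSS hy', hd] at hrd
            exact hrd rfl
        obtain ⟨n, hiso⟩ := aux_path_iso hG D hinj
        exact hpath D n hiso
      · push_neg at hex
        obtain ⟨a, b, hab⟩ := Fintype.exists_pair_of_one_lt_card
          (α := (G.induce {u : V | u ≠ v}).ConnectedComponent) (by omega)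
        exact hfree2 ⟨a, b, hab,
          fun r hr hrv hSS => hex a r hr hrv hSS,
          fun r hr hrv hSS => hex b r hr hrv hSS⟩
end

section
/- Let G be a connected graph and let v be a cut-vertex such that G - v has exactly two connected components G_1 and G_2, with the induced subgraph on V(G_1) ∪ {v} isomorphic to a path. Then v is not a basis forced vertex of G, i.e., there exists a metric basis of G not containing v. -/
open SimpleGraph

namespace Stmt3Aux

variable {V : Type*} {G : SimpleGraph V}

/-- Lift a walk whose support lies in `s` to the induced subgraph on `s`. -/
lemma walk_lift {s : Set V} {a b : V} (p : G.Walk a b) (hs : ∀ w ∈ p.support, w ∈ s)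
    (ha : a ∈ s) (hb : b ∈ s) :
    ∃ q : (G.induce s).Walk ⟨a, ha⟩ ⟨b, hb⟩,
      q.length = p.length ∧ ∀ z ∈ q.support, (z : V) ∈ p.support := by
  induction p with
  | nil =>
      exact ⟨Walk.nil, rfl, by simp⟩
  | @cons a c b h p ih =>
      have hc : c ∈ s := hs c (by simp)
      obtain ⟨q, hq1, hq2⟩ := ih (fun w hw => hs w (by simp [hw])) hc hb
      refine ⟨Walk.cons (by simpa using h) q, by simp [hq1], ?_⟩
      intro z hz
      rcases List.mem_cons.mp (by simpa [Walk.support_cons] using hz) with h1 | h1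
      · simp [h1]
      · simp [Walk.support_cons]
        exact Or.inr (hq2 z h1)

lemma pg_walk_len_ge {n : ℕ} {i j : Fin n} (p : (pathGraph n).Walk i j) :
    (i.val - j.val) + (j.val - i.val) ≤ p.length := by
  induction p with
  | nil => omega
  | @cons i c j h p ih =>
      rw [pathGraph_adj] at h
      rw [Walk.length_cons]
      omega

lemma pg_walk_exists {n : ℕ} (d : ℕ) (i j : Fin n)
    (h : (i.val - j.val) + (j.val - i.val) = d) :
    ∃ p : (pathGraph n).Walk i j, p.length = d := by
  induction d generalizing i j with
  | zero =>
      have : i = j := Fin.ext (by omega)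
      subst this
      exact ⟨Walk.nil, rfl⟩
  | succ d ih =>
      rcases lt_or_gt_of_ne (show i.val ≠ j.val by omega) with hlt | hgt
      · have hcn : i.val + 1 < n := lt_of_le_of_lt hlt j.isLt
        set c : Fin n := ⟨i.val + 1, hcn⟩ with hc
        have hadj : (pathGraph n).Adj i c := pathGraph_adj.mpr (Or.inl rfl)
        obtain ⟨p, hp⟩ := ih c j (by simp only [hc]; omega)
        exact ⟨Walk.cons hadj p, by simp [hp]⟩
      · have hcn : i.val - 1 < n := lt_of_le_of_lt (by omega) i.isLt
        set c : Fin n := ⟨i.val - 1, hcn⟩ with hc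
        have hadj : (pathGraph n).Adj i c := pathGraph_adj.mpr (Or.inr (by simp only [hc]; omega))
        obtain ⟨p, hp⟩ := ih c j (by simp only [hc]; omega)
        exact ⟨Walk.cons hadj p, by simp [hp]⟩

lemma pg_dist {n : ℕ} (i j : Fin n) :
    (pathGraph n).dist i j = (i.val - j.val) + (j.val - i.val) := by
  obtain ⟨p, hp⟩ := pg_walk_exists _ i j rfl
  refine le_antisymm (hp ▸ dist_le p) ?_
  have hr : (pathGraph n).Reachable i j := ⟨p⟩
  obtain ⟨q, hq⟩ := hr.exists_walk_length_eq_dist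
  calc (i.val - j.val) + (j.val - i.val) ≤ q.length := pg_walk_len_ge q
    _ = _ := hq

lemma pg_mem_support {n : ℕ} {a b : Fin n} (p : (pathGraph n).Walk a b) (c : Fin n)
    (hc : (a.val ≤ c.val ∧ c.val ≤ b.val) ∨ (b.val ≤ c.val ∧ c.val ≤ a.val)) :
    c ∈ p.support := by
  induction p with
  | nil =>
      simp only [Walk.support_nil, List.mem_singleton]
      exact Fin.ext (by omega)
  | @cons a a' b h p ih =>
      by_cases hca : c = a
      · simp [hca]
      · have hne : c.val ≠ a.val := fun hh => hca (Fin.ext hh)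
        rw [pathGraph_adj] at h
        have : c ∈ p.support := ih (by omega)
        simp [Walk.support_cons, this]

lemma iso_dist_le {W : Type*} {H : SimpleGraph W} (f : G ≃g H) (a b : V)
    (h : G.Reachable a b) : H.dist (f a) (f b) ≤ G.dist a b := by
  obtain ⟨p, hp⟩ := h.exists_walk_length_eq_dist
  calc H.dist (f a) (f b) ≤ (p.map f.toHom).length := dist_le _
    _ = p.length := Walk.length_map f.toHom p
    _ = _ := hp

lemma iso_dist {W : Type*} {H : SimpleGraph W} (f : G ≃g H) (a b : V)
    (h : G.Reachable a b) : H.dist (f a) (f b) = G.dist a b := by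
  refine le_antisymm (iso_dist_le f a b h) ?_
  have h' : H.Reachable (f a) (f b) := by
    obtain ⟨p⟩ := h
    exact ⟨p.map f.toHom⟩
  have := iso_dist_le f.symm (f a) (f b) h'
  simpa using this

/-- Reversal isomorphism of the path graph. -/
def pgRev (n : ℕ) : pathGraph n ≃g pathGraph n where
  toEquiv := Fin.revPerm
  map_rel_iff' := by
    intro i j
    have hi := i.isLt
    have hj := j.isLt
    simp only [pathGraph_adj, Fin.revPerm_apply, Fin.val_rev]
    omega

end Stmt3Aux

theorem stmt3 {V : Type*} [Fintype V] (G : SimpleGraph V) (hG : G.Connected) (v : V)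
    (hcut : ¬ (G.induce {u | u ≠ v}).Connected)
    (h2 : Nat.card (G.induce {u | u ≠ v}).ConnectedComponent = 2)
    (hpath : ∃ C : (G.induce {u | u ≠ v}).ConnectedComponent, ∃ n : ℕ,
      Nonempty ((G.induce ((Subtype.val '' C.supp) ∪ {v})) ≃g pathGraph n)) :
    ∃ R : Set V, IsMetricBasis G R ∧ v ∉ R := by
  classical
  clear hcut h2
  obtain ⟨C, n, ⟨e⟩⟩ := hpath
  set S : Set V := (Subtype.val '' C.supp) ∪ {v} with hSdef
  have hvS : v ∈ S := Set.mem_union_right _ rfl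
  have hmem : ∀ x : V, x ∈ S → x ≠ v → x ∈ Subtype.val '' C.supp := by
    intro x hx hxv
    rcases (Set.mem_union _ _ _).mp hx with h | h
    · exact h
    · exact absurd (Set.mem_singleton_iff.mp h) hxv
  obtain ⟨c₀, hc₀⟩ := C.exists_rep
  have hc₀C : c₀ ∈ C.supp := hc₀
  have hc₀S : (c₀ : V) ∈ S := Set.mem_union_left _ ⟨c₀, hc₀C, rfl⟩
  have hc₀v : (c₀ : V) ≠ v := c₀.2
  -- n ≥ 2
  have hn2 : 2 ≤ n := by
    have hne : e ⟨(c₀ : V), hc₀S⟩ ≠ e ⟨v, hvS⟩ := by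
      intro h
      exact hc₀v (congrArg Subtype.val (e.injective h))
    have h1 := (e ⟨(c₀ : V), hc₀S⟩).isLt
    have h2 := (e ⟨v, hvS⟩).isLt
    have h3 : (e ⟨(c₀ : V), hc₀S⟩).val ≠ (e ⟨v, hvS⟩).val := fun hh => hne (Fin.ext hh)
    omega
  -- separation lemma
  have hsep : ∀ (a b : V), a ∈ Subtype.val '' C.supp → b ∉ S → ∀ (p : G.Walk a b),
      v ∈ p.support := by
    intro a b ha hb p
    by_contra hv
    have hs : ∀ w ∈ p.support, w ∈ {u | u ≠ v} := fun w hw hwv => hv (hwv ▸ hw)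
    have hav : a ∈ {u | u ≠ v} := hs a p.start_mem_support
    have hbv : b ∈ {u | u ≠ v} := hs b p.end_mem_support
    obtain ⟨q, -, -⟩ := Stmt3Aux.walk_lift p hs hav hbv
    obtain ⟨a', ha'C, ha'⟩ := ha
    have haC : (⟨a, hav⟩ : {u | u ≠ v}) ∈ C.supp := by
      have : a' = ⟨a, hav⟩ := Subtype.ext ha'
      rwa [this] at ha'C
    have hbC : (⟨b, hbv⟩ : {u | u ≠ v}) ∈ C.supp := by
      rw [ConnectedComponent.mem_supp_iff] at haC ⊢
      rw [← haC]
      exact ConnectedComponent.sound ⟨q.reverse⟩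
    exact hb (Set.mem_union_left _ ⟨⟨b, hbv⟩, hbC, rfl⟩)
  -- paths between vertices of S stay in S
  have hpathS : ∀ (a b : V), a ∈ S → b ∈ S → ∀ (p : G.Walk a b), p.IsPath →
      ∀ w ∈ p.support, w ∈ S := by
    intro a b ha hb p hp w hw
    by_contra hwS
    have hwv : w ≠ v := fun h => hwS (h ▸ hvS)
    have hvq1 : v ∈ (p.takeUntil w hw).support := by
      rcases eq_or_ne a v with h | h
      · exact h ▸ (p.takeUntil w hw).start_mem_support
      · exact hsep a w (hmem a ha h) hwS _
    have hvq2 : v ∈ (p.dropUntil w hw).support := by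
      rcases eq_or_ne b v with h | h
      · exact h ▸ (p.dropUntil w hw).end_mem_support
      · have := hsep b w (hmem b hb h) hwS (p.dropUntil w hw).reverse
        simpa [Walk.support_reverse] using this
    have hnd : p.support.Nodup := hp.support_nodup
    rw [← p.take_spec hw, Walk.support_append] at hnd
    have hdisj := List.disjoint_of_nodup_append hnd
    have hvtail : v ∈ (p.dropUntil w hw).support.tail := by
      rw [(p.dropUntil w hw).support_eq_cons] at hvq2
      rcases List.mem_cons.mp hvq2 with h | h
      · exact absurd h.symm hwv
      · exact h
    exact hdisj hvq1 hvtail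
  -- distance within S is computed in the induced subgraph
  have hdistS : ∀ (a b : ↥S), (G.induce S).dist a b = G.dist ↑a ↑b := by
    intro a b
    obtain ⟨p, hp, hplen⟩ := hG.exists_path_of_dist ↑a ↑b
    have hps : ∀ w ∈ p.support, w ∈ S := hpathS _ _ a.2 b.2 p hp
    obtain ⟨q, hqlen, -⟩ := Stmt3Aux.walk_lift p hps a.2 b.2
    refine le_antisymm ?_ ?_
    · calc (G.induce S).dist a b ≤ q.length := dist_le q
        _ = p.length := hqlen
        _ = G.dist ↑a ↑b := hplen
    · have hr : (G.induce S).Reachable a b := ⟨q⟩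
      obtain ⟨r, hrlen⟩ := hr.exists_walk_length_eq_dist
      calc G.dist ↑a ↑b ≤ (r.map (SimpleGraph.Embedding.induce S).toHom).length := dist_le _
        _ = r.length := Walk.length_map _ r
        _ = (G.induce S).dist a b := hrlen
  -- v is an endpoint of the path
  have hendpoint : (e ⟨v, hvS⟩).val = 0 ∨ (e ⟨v, hvS⟩).val = n - 1 := by
    by_contra hcon
    push_neg at hcon
    obtain ⟨h0, h1⟩ := hcon
    have hm := (e ⟨v, hvS⟩).isLt
    have hn0 : (0:ℕ) < n := by omega
    have hn1 : n - 1 < n := by omega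
    set a' : ↥S := e.symm ⟨0, hn0⟩ with ha'def
    set b' : ↥S := e.symm ⟨n-1, hn1⟩ with hb'def
    have hea' : e a' = ⟨0, hn0⟩ := e.apply_symm_apply _
    have heb' : e b' = ⟨n-1, hn1⟩ := e.apply_symm_apply _
    have ha'v : (a' : V) ≠ v := by
      intro h
      have h2 : e a' = e ⟨v, hvS⟩ := congrArg e (Subtype.ext h)
      rw [hea'] at h2
      exact h0 (congrArg Fin.val h2.symm)
    have hb'v : (b' : V) ≠ v := by
      intro h
      have h2 : e b' = e ⟨v, hvS⟩ := congrArg e (Subtype.ext h)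
      rw [heb'] at h2
      exact h1 (congrArg Fin.val h2.symm)
    obtain ⟨ca, hcaC, hca⟩ := hmem ↑a' a'.2 ha'v
    obtain ⟨cb, hcbC, hcb⟩ := hmem ↑b' b'.2 hb'v
    have hreach : (G.induce {u | u ≠ v}).Reachable ca cb := by
      rw [ConnectedComponent.mem_supp_iff] at hcaC hcbC
      exact ConnectedComponent.exact (hcaC.trans hcbC.symm)
    obtain ⟨W⟩ := hreach
    have hWsupp : ∀ z ∈ W.support, z ∈ C.supp := by
      intro z hz
      have hzr : (G.induce {u | u ≠ v}).Reachable ca z := ⟨W.takeUntil z hz⟩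
      rw [ConnectedComponent.mem_supp_iff] at hcaC ⊢
      rw [← hcaC]
      exact (ConnectedComponent.sound hzr).symm
    have hWgsupp : ∀ w ∈ (W.map (SimpleGraph.Embedding.induce {u | u ≠ v}).toHom).support,
        w ∈ S := by
      intro w hw
      rw [Walk.support_map] at hw
      obtain ⟨z, hzW, rfl⟩ := List.mem_map.mp hw
      exact Set.mem_union_left _ ⟨z, hWsupp z hzW, rfl⟩
    obtain ⟨q, -, hqsupp⟩ := Stmt3Aux.walk_lift
      (W.map (SimpleGraph.Embedding.induce {u | u ≠ v}).toHom) hWgsupp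
      (hWgsupp _ ((W.map (SimpleGraph.Embedding.induce {u | u ≠ v}).toHom).start_mem_support))
      (hWgsupp _ ((W.map (SimpleGraph.Embedding.induce {u | u ≠ v}).toHom).end_mem_support))
    have hQsupp := Stmt3Aux.pg_mem_support
      (((q.copy (Subtype.ext hca : _ = a') (Subtype.ext hcb : _ = b')).map e.toHom).copy
        hea' heb') (e ⟨v, hvS⟩) (by simp only [Fin.val_mk]; omega)
    rw [Walk.support_copy, Walk.support_map, Walk.support_copy] at hQsupp
    obtain ⟨z, hzq, hez⟩ := List.mem_map.mp hQsupp
    have hzv : z = ⟨v, hvS⟩ := e.injective hez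
    have hvin := hqsupp z hzq
    rw [hzv] at hvin
    rw [Walk.support_map] at hvin
    obtain ⟨zz, -, hzz⟩ := List.mem_map.mp hvin
    exact zz.2 hzz
  -- normalize so that v sits at position 0
  obtain ⟨f, hf0⟩ : ∃ f : (G.induce S) ≃g pathGraph n, (f ⟨v, hvS⟩).val = 0 := by
    rcases hendpoint with h | h
    · exact ⟨e, h⟩
    · refine ⟨e.trans (Stmt3Aux.pgRev n), ?_⟩
      have : (e.trans (Stmt3Aux.pgRev n)) ⟨v, hvS⟩ = Fin.rev (e ⟨v, hvS⟩) := rfl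
      rw [this, Fin.val_rev, h]
      omega
  have hn1 : n - 1 < n := by omega
  set ulast : ↥S := f.symm ⟨n-1, hn1⟩ with hudef
  have hfu : f ulast = ⟨n-1, hn1⟩ := f.apply_symm_apply _
  have huv : (ulast : V) ≠ v := by
    intro h
    have h2 : f ulast = f ⟨v, hvS⟩ := congrArg f (Subtype.ext h)
    rw [hfu] at h2
    have h3 := congrArg Fin.val h2
    rw [hf0] at h3
    simp only [Fin.val_mk] at h3
    omega
  have hreachInd : ∀ a b : ↥S, (G.induce S).Reachable a b := by
    intro a b
    have hc : (pathGraph ((n-1)+1)).Connected := pathGraph_connected (n-1)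
    have hnc : (n-1)+1 = n := by omega
    rw [hnc] at hc
    obtain ⟨p⟩ := hc.preconnected (f a) (f b)
    exact ⟨(p.map f.symm.toHom).copy (f.symm_apply_apply a) (f.symm_apply_apply b)⟩
  have hkeyS : ∀ x : V, x ∈ S → G.dist ↑ulast x + G.dist v x = n - 1 := by
    intro x hx
    have h1 : G.dist (↑ulast) x = (G.induce S).dist ulast ⟨x, hx⟩ := (hdistS ulast ⟨x, hx⟩).symm
    have h2 : G.dist v x = (G.induce S).dist ⟨v, hvS⟩ ⟨x, hx⟩ := (hdistS ⟨v, hvS⟩ ⟨x, hx⟩).symm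
    rw [h1, h2, ← Stmt3Aux.iso_dist f _ _ (hreachInd _ _),
      ← Stmt3Aux.iso_dist f _ _ (hreachInd _ _), Stmt3Aux.pg_dist, Stmt3Aux.pg_dist]
    have hval : (f ulast).val = n - 1 := by rw [hfu]
    have hj := (f ⟨x, hx⟩).isLt
    omega
  have hdistuv : G.dist (↑ulast) v = n - 1 := by
    have h := hkeyS v hvS
    rwa [SimpleGraph.dist_self, Nat.add_zero] at h
  have hkey : ∀ x : V,
      (G.dist ↑ulast x + G.dist v x = n - 1) ∨ (G.dist ↑ulast x = (n - 1) + G.dist v x) := by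
    intro x
    by_cases hx : x ∈ S
    · exact Or.inl (hkeyS x hx)
    · right
      refine le_antisymm ?_ ?_
      · calc G.dist ↑ulast x ≤ G.dist ↑ulast v + G.dist v x := hG.dist_triangle
          _ = (n-1) + G.dist v x := by rw [hdistuv]
      · obtain ⟨p, hp, hplen⟩ := hG.exists_path_of_dist ↑ulast x
        have huC : (ulast : V) ∈ Subtype.val '' C.supp := hmem _ ulast.2 huv
        have hvp : v ∈ p.support := hsep _ x huC hx p
        have hlen : (p.takeUntil v hvp).length + (p.dropUntil v hvp).length = p.length := by
          have := congrArg Walk.length (p.take_spec hvp)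
          rwa [Walk.length_append] at this
        have h1 : G.dist (↑ulast) v ≤ (p.takeUntil v hvp).length := dist_le _
        have h2 : G.dist v x ≤ (p.dropUntil v hvp).length := dist_le _
        omega
  have hkey2 : ∀ x y : V, G.dist ↑ulast x = G.dist ↑ulast y → G.dist v x = G.dist v y := by
    intro x y h
    rcases hkey x with h1 | h1 <;> rcases hkey y with h2 | h2 <;> omega
  -- assemble the basis
  have huniv : IsResolving G (Set.univ : Set V) := by
    intro x y hxy
    refine ⟨x, trivial, ?_⟩
    rw [SimpleGraph.dist_self]
    intro h
    exact hxy (hG.dist_eq_zero_iff.mp h.symm)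
  have hne : {m | ∃ R : Set V, IsResolving G R ∧ R.ncard = m}.Nonempty :=
    ⟨(Set.univ : Set V).ncard, Set.univ, huniv, rfl⟩
  have hmemInf : ∃ R : Set V, IsResolving G R ∧ R.ncard = metricDim G := Nat.sInf_mem hne
  obtain ⟨R₀, hR₀res, hR₀card⟩ := hmemInf
  by_cases hvR : v ∈ R₀
  · set R' : Set V := insert (↑ulast) (R₀ \ {v}) with hR'def
    have hR'res : IsResolving G R' := by
      intro x y hxy
      obtain ⟨r, hr, hd⟩ := hR₀res x y hxy
      by_cases hrv : r = v
      · subst hrv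
        exact ⟨↑ulast, Set.mem_insert _ _, fun h => hd (hkey2 x y h)⟩
      · exact ⟨r, Set.mem_insert_of_mem _ ⟨hr, hrv⟩, hd⟩
    have hle : metricDim G ≤ R'.ncard := Nat.sInf_le ⟨R', hR'res, rfl⟩
    have hge : R'.ncard ≤ metricDim G := by
      calc R'.ncard ≤ (R₀ \ {v}).ncard + 1 := Set.ncard_insert_le _ _
        _ = R₀.ncard := Set.ncard_diff_singleton_add_one hvR (Set.toFinite R₀)
        _ = metricDim G := hR₀card
    refine ⟨R', ⟨hR'res, le_antisymm hge hle⟩, ?_⟩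
    intro hvR'
    rcases hvR' with h | h
    · exact huv h.symm
    · exact h.2 rfl
  · exact ⟨R₀, ⟨hR₀res, hR₀card⟩, hvR⟩
end

section
/- Every finite connected graph has a metric basis that contains no cut-vertex. -/
open SimpleGraph

section Aux
variable {V : Type*} {G : SimpleGraph V}
variable {V : Type*} {G : SimpleGraph V}

def Avoids (G : SimpleGraph V) (v a b : V) : Prop := ∃ p : G.Walk a b, v ∉ p.support

lemma Avoids.refl {v a : V} (h : a ≠ v) : Avoids G v a a :=
  ⟨Walk.nil, by simp [h.symm]⟩

lemma Avoids.symm {v a b : V} : Avoids G v a b → Avoids G v b a := by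
  rintro ⟨p, hp⟩
  exact ⟨p.reverse, by simpa using hp⟩

lemma Avoids.trans {v a b c : V} : Avoids G v a b → Avoids G v b c → Avoids G v a c := by
  rintro ⟨p, hp⟩ ⟨q, hq⟩
  exact ⟨p.append q, by simp [Walk.mem_support_append_iff, hp, hq]⟩

lemma dist_split_s4 (hG : G.Connected) {v a b : V} (h : ¬ Avoids G v a b) :
    G.dist a b = G.dist a v + G.dist v b := by
  classical
  refine le_antisymm hG.dist_triangle ?_
  obtain ⟨p, hp⟩ := hG.exists_walk_length_eq_dist a b
  have hv : v ∈ p.support := by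
    by_contra h'
    exact h ⟨p, h'⟩
  calc G.dist a v + G.dist v b
      ≤ (p.takeUntil v hv).length + (p.dropUntil v hv).length :=
        add_le_add (dist_le _) (dist_le _)
    _ = p.length := by rw [← Walk.length_append, p.take_spec hv]
    _ = G.dist a b := hp

lemma reach_ind {s : Set V} {a b : V} (p : G.Walk a b) (hp : ∀ x ∈ p.support, x ∈ s)
    (ha : a ∈ s) (hb : b ∈ s) : (G.induce s).Reachable ⟨a, ha⟩ ⟨b, hb⟩ := by
  induction p with
  | nil => exact Reachable.refl _
  | @cons u w c h q ih =>
    have hw : w ∈ s := hp w (by simp)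
    have hadj : (G.induce s).Adj ⟨u, ha⟩ ⟨w, hw⟩ := by simpa using h
    exact hadj.reachable.trans (ih (fun x hx => hp x (by simp [hx])) hw hb)

lemma connected_induce_of_hub {s : Set V} {x0 : V} (hx0 : x0 ∈ s)
    (h : ∀ z ∈ s, ∃ p : G.Walk x0 z, ∀ x ∈ p.support, x ∈ s) :
    (G.induce s).Connected := by
  rw [connected_iff]
  refine ⟨?_, ⟨⟨x0, hx0⟩⟩⟩
  rintro ⟨a, ha⟩ ⟨b, hb⟩
  obtain ⟨p, hp⟩ := h a ha
  obtain ⟨q, hq⟩ := h b hb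
  exact (reach_ind p hp hx0 ha).symm.trans (reach_ind q hq hx0 hb)

lemma exists_not_avoids {v : V} (hw : ∃ w, w ≠ v)
    (hcut : ¬ (G.induce {u | u ≠ v}).Connected) :
    ∃ a b, a ≠ v ∧ b ≠ v ∧ ¬ Avoids G v a b := by
  by_contra hcon
  push_neg at hcon
  obtain ⟨w, hwv⟩ := hw
  refine hcut (connected_induce_of_hub (s := {u | u ≠ v}) hwv ?_)
  intro z hz
  obtain ⟨p, hp⟩ := hcon w z hwv hz
  exact ⟨p, fun x hx hxv => hp (hxv ▸ hx)⟩

/-- from a path from `v` hitting `u`, a walk from `u` onward avoiding `v` -/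
lemma avoids_dropUntil {v z : V} (p : G.Walk v z) (hp : p.IsPath) {u : V} (hu : u ∈ p.support)
    (huv : u ≠ v) : Avoids G v u z := by
  classical
  refine ⟨p.dropUntil u hu, ?_⟩
  intro hvq
  have hnodup := hp.support_nodup
  rw [← p.take_spec hu, Walk.support_append] at hnodup
  have hd := List.disjoint_of_nodup_append hnodup
  have h1 : v ∈ (p.takeUntil u hu).support := Walk.start_mem_support _
  have h2 : v ∈ (p.dropUntil u hu).support.tail := by
    rw [Walk.support_eq_cons] at hvq
    rcases List.mem_cons.mp hvq with h | h
    · exact absurd h.symm huv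
    · exact h
  exact hd h1 h2

/-- The exchange lemma: a cut vertex in a resolving set can be replaced by a non-cut vertex. -/
lemma exchange [Finite V] (hG : G.Connected) {R : Set V} (hR : IsResolving G R)
    {v : V} (hv : v ∈ R) (hw1 : ∃ w, w ≠ v)
    (hcut : ¬ (G.induce {u | u ≠ v}).Connected) :
    ∃ u, u ≠ v ∧ (G.induce {w | w ≠ u}).Connected ∧
      IsResolving G (insert u (R \ {v})) := by
  classical
  obtain ⟨a, b, ha, hb, hnab⟩ := exists_not_avoids hw1 hcut
  -- find r ∈ R, r ≠ v
  obtain ⟨r, hrR, hrv, hra, hrb⟩ :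
      ∃ r ∈ R, r ≠ v ∧ (¬ Avoids G v a r ∨ ¬ Avoids G v b r) ∧ True := by
    -- neighbors of v on the a-side and b-side
    obtain ⟨p, hpp, -⟩ := (hG v a).exists_path_of_dist
    obtain ⟨q, hqp, -⟩ := (hG v b).exists_path_of_dist
    cases p with
    | nil => exact absurd rfl ha.symm
    | @cons _ x _ hx p' =>
      cases q with
      | nil => exact absurd rfl hb.symm
      | @cons _ y _ hy q' =>
        rw [Walk.cons_isPath_iff] at hpp hqp
        have hxa : Avoids G v x a := ⟨p', hpp.2⟩
        have hyb : Avoids G v y b := ⟨q', hqp.2⟩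
        have hxy : x ≠ y := by
          rintro rfl
          exact hnab (hxa.symm.trans hyb)
        obtain ⟨r, hrR, hrd⟩ := hR x y hxy
        have hrv : r ≠ v := by
          rintro rfl
          rw [dist_eq_one_iff_adj.mpr hx, dist_eq_one_iff_adj.mpr hy] at hrd
          exact hrd rfl
        refine ⟨r, hrR, hrv, ?_, trivial⟩
        by_contra hcc
        push_neg at hcc
        exact hnab (hcc.1.trans hcc.2.symm)
  clear hrb
  -- choose the anchor c on the side away from r
  obtain ⟨c, hcv, hcr⟩ : ∃ c, c ≠ v ∧ ¬ Avoids G v c r := by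
    rcases hra with h | h
    exacts [⟨a, ha, h⟩, ⟨b, hb, h⟩]
  set C : Set V := {z | z ≠ v ∧ Avoids G v c z} with hC
  have hcC : c ∈ C := ⟨hcv, Avoids.refl hcv⟩
  have hCr : ∀ x ∈ C, ¬ Avoids G v x r := fun x hx hax => hcr (hx.2.trans hax)
  obtain ⟨u, huC, hmax⟩ := Set.exists_max_image C (G.dist v) (Set.toFinite C) ⟨c, hcC⟩
  have huv : u ≠ v := huC.1
  have hcu : Avoids G v c u := huC.2
  -- splits
  have hout : ∀ z, z ≠ v → z ∉ C → G.dist u z = G.dist u v + G.dist v z := by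
    intro z hz hzC
    refine dist_split_s4 hG fun hA => hzC ⟨hz, hcu.trans hA⟩
  have hinr : ∀ x ∈ C, G.dist x r = G.dist x v + G.dist v r :=
    fun x hx => dist_split_s4 hG (hCr x hx)
  -- u is not a cut vertex
  have hnc : (G.induce {w | w ≠ u}).Connected := by
    refine connected_induce_of_hub (x0 := v) (Ne.symm huv) ?_
    intro z hz
    have hAz : Avoids G u v z := by
      by_cases hzv : z = v
      · subst hzv; exact Avoids.refl (Ne.symm huv)
      by_cases hzC : z ∈ C
      · by_contra hA
        have hsp := dist_split_s4 hG hA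
        have h1 : 0 < G.dist u z := hG.pos_dist_of_ne (Ne.symm hz)
        have h2 := hmax z hzC
        omega
      · by_contra hA
        obtain ⟨p, hpp, -⟩ := (hG v z).exists_path_of_dist
        have hu : u ∈ p.support := by
          by_contra h'
          exact hA ⟨p, h'⟩
        have := avoids_dropUntil p hpp hu huv
        exact hzC ⟨hzv, hcu.trans this⟩
    obtain ⟨p, hp⟩ := hAz
    exact ⟨p, fun x hx hxu => hp (hxu ▸ hx)⟩
  refine ⟨u, huv, hnc, ?_⟩
  -- resolving
  intro x y hxy
  obtain ⟨r0, hr0R, hd0⟩ := hR x y hxy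
  by_cases hr0v : r0 = v
  swap
  · exact ⟨r0, Set.mem_insert_iff.mpr (Or.inr ⟨hr0R, hr0v⟩), hd0⟩
  rw [hr0v] at hd0
  by_contra hcon
  push_neg at hcon
  have hu : G.dist u x = G.dist u y :=
    hcon u (Set.mem_insert _ _)
  have hr : G.dist r x = G.dist r y :=
    hcon r (Set.mem_insert_iff.mpr (Or.inr ⟨hrR, hrv⟩))
  -- case v = one of them, other in/out C
  have vcase : ∀ z, z ≠ v → G.dist u v = G.dist u z → G.dist r v = G.dist r z → False := by
    intro z hz huz hrz
    have hzpos : 0 < G.dist v z := hG.pos_dist_of_ne fun h => hz h.symm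
    by_cases hzC : z ∈ C
    · have := hinr z hzC
      rw [SimpleGraph.dist_comm (G := G) (u := z) (v := r), SimpleGraph.dist_comm (G := G) (u := z) (v := v)] at this
      rw [SimpleGraph.dist_comm (G := G) (u := r) (v := v)] at hrz
      omega
    · have := hout z hz hzC
      omega
  -- mixed case
  have mcase : ∀ x' y', x' ≠ v → y' ≠ v → x' ∈ C → y' ∉ C →
      G.dist u x' = G.dist u y' → G.dist r x' = G.dist r y' →
      G.dist v x' ≠ G.dist v y' → False := by
    intro x' y' hx' hy' hxC hyC huxy hrxy hne
    have e1 := hinr x' hxC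
    have e2 := hout y' hy' hyC
    have t1 : G.dist r y' ≤ G.dist r v + G.dist v y' := hG.dist_triangle
    have t2 : G.dist u x' ≤ G.dist u v + G.dist v x' := hG.dist_triangle
    rw [SimpleGraph.dist_comm (G := G) (u := x') (v := r), SimpleGraph.dist_comm (G := G) (u := x') (v := v)] at e1
    rw [SimpleGraph.dist_comm (G := G) (u := v) (v := r)] at e1
    omega
  have hdv : G.dist v x ≠ G.dist v y := hd0
  by_cases hxv : x = v
  · subst hxv
    exact vcase y (Ne.symm hxy) hu hr
  by_cases hyv : y = v
  · subst hyv
    exact vcase x (Ne.symm hxy).symm hu.symm hr.symm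
  by_cases hxC : x ∈ C <;> by_cases hyC : y ∈ C
  · -- both in C
    have e1 := hinr x hxC
    have e2 := hinr y hyC
    rw [SimpleGraph.dist_comm (G := G) (u := x) (v := r), SimpleGraph.dist_comm (G := G) (u := x) (v := v)] at e1
    rw [SimpleGraph.dist_comm (G := G) (u := y) (v := r), SimpleGraph.dist_comm (G := G) (u := y) (v := v)] at e2
    omega
  · exact mcase x y hxv hyv hxC hyC hu hr hdv
  · exact mcase y x hyv hxv hyC hxC hu.symm hr.symm hdv.symm
  · -- both out of C
    have e1 := hout x hxv hxC
    have e2 := hout y hyv hyC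
    omega
end Aux

theorem stmt4 {V : Type*} [Fintype V] (G : SimpleGraph V) (hG : G.Connected) :
    ∃ R : Set V, IsMetricBasis G R ∧
      ∀ v ∈ R, (G.induce {u | u ≠ v}).Connected := by
  classical
  have hle : ∀ R : Set V, IsResolving G R → metricDim G ≤ R.ncard :=
    fun R h => Nat.sInf_le ⟨R, h, rfl⟩
  have huniv : IsResolving G (Set.univ : Set V) := by
    intro x y hxy
    refine ⟨x, Set.mem_univ x, ?_⟩
    rw [SimpleGraph.dist_self]
    exact (hG.pos_dist_of_ne hxy).ne
  have hbasis : ∃ R : Set V, IsMetricBasis G R := by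
    obtain ⟨R, h1, h2⟩ := Nat.sInf_mem (⟨_, Set.univ, huniv, rfl⟩ :
      {n | ∃ R : Set V, IsResolving G R ∧ R.ncard = n}.Nonempty)
    exact ⟨R, h1, h2⟩
  obtain ⟨R0, hR0⟩ := hbasis
  set T := {n | ∃ R : Set V, IsMetricBasis G R ∧
    {v ∈ R | ¬ (G.induce {u | u ≠ v}).Connected}.ncard = n} with hTdef
  obtain ⟨R, hRb, hcard⟩ := Nat.sInf_mem (⟨_, R0, hR0, rfl⟩ : T.Nonempty)
  refine ⟨R, hRb, ?_⟩
  by_contra hbad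
  push_neg at hbad
  obtain ⟨v, hvR, hvcut⟩ := hbad
  have hw1 : ∃ w, w ≠ v := by
    by_contra hall
    push_neg at hall
    have hres : IsResolving G (∅ : Set V) :=
      fun x y hxy => absurd ((hall x).trans (hall y).symm) hxy
    have h0 : metricDim G = 0 := Nat.le_zero.mp (by simpa using hle ∅ hres)
    have hRe : R = ∅ := (Set.ncard_eq_zero (Set.toFinite R)).mp (hRb.2.trans h0)
    simp [hRe] at hvR
  obtain ⟨u, huv, hnc, hures⟩ := exchange hG hRb.1 hvR hw1 hvcut
  have huR : u ∉ R := by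
    intro hu
    have heq : insert u (R \ {v}) = R \ {v} := Set.insert_eq_of_mem ⟨hu, huv⟩
    have h1 := hle _ (heq ▸ hures)
    have h2 : (R \ {v}).ncard < R.ncard :=
      Set.ncard_diff_singleton_lt_of_mem hvR (Set.toFinite R)
    have h3 := hRb.2
    omega
  have hcard' : (insert u (R \ {v})).ncard = R.ncard := Set.ncard_exchange huR hvR
  have hbasis' : IsMetricBasis G (insert u (R \ {v})) := ⟨hures, hcard'.trans hRb.2⟩
  have hsub : {z ∈ insert u (R \ {v}) | ¬ (G.induce {w | w ≠ z}).Connected} ⊆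
      {z ∈ R | ¬ (G.induce {w | w ≠ z}).Connected} \ {v} := by
    rintro z ⟨hz, hcz⟩
    rcases Set.mem_insert_iff.mp hz with rfl | hz'
    · exact absurd hnc hcz
    · exact ⟨⟨hz'.1, hcz⟩, hz'.2⟩
  have hlt : {z ∈ insert u (R \ {v}) | ¬ (G.induce {w | w ≠ z}).Connected}.ncard <
      {z ∈ R | ¬ (G.induce {w | w ≠ z}).Connected}.ncard :=
    lt_of_le_of_lt (Set.ncard_le_ncard hsub (Set.toFinite _))
      (Set.ncard_diff_singleton_lt_of_mem ⟨hvR, hvcut⟩ (Set.toFinite _))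
  have hmem : {z ∈ insert u (R \ {v}) | ¬ (G.induce {w | w ≠ z}).Connected}.ncard ∈ T :=
    ⟨_, hbasis', rfl⟩
  have hfin := Nat.sInf_le hmem
  omega
end

section
/- Let G be a connected graph with a pendant u whose unique neighbour is the cut-vertex v. If G - {v, u} has at least two connected components, then u is not a basis forced vertex of G. -/
open SimpleGraph

section Helpers
variable {V : Type*}

lemma pend_dist (G : SimpleGraph V) (hG : G.Connected) (u v : V)
    (hpend : ∀ w : V, G.Adj u w ↔ w = v) (x : V) (hx : x ≠ u) :
    G.dist u x = G.dist v x + 1 := by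
  have hadj : G.Adj u v := (hpend v).mpr rfl
  have h1 : G.dist u v = 1 := dist_eq_one_iff_adj.mpr hadj
  refine le_antisymm ?_ ?_
  · calc G.dist u x ≤ G.dist u v + G.dist v x := hG.dist_triangle
      _ = G.dist v x + 1 := by omega
  · obtain ⟨p, hp⟩ := hG.exists_walk_length_eq_dist u x
    cases p with
    | nil => exact absurd rfl hx
    | @cons _ w _ h q =>
      have hw := (hpend _).mp h
      have hq : G.dist v x ≤ q.length := hw ▸ dist_le q
      simp only [Walk.length_cons] at hp
      omega

lemma walk_reach_induce_s5 (G : SimpleGraph V) (S : Set V) :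
    ∀ {a b : V} (p : G.Walk a b) (hs : ∀ w ∈ p.support, w ∈ S),
    (G.induce S).Reachable ⟨a, hs a p.start_mem_support⟩ ⟨b, hs b p.end_mem_support⟩ := by
  intro a b p
  induction p with
  | nil => intro hs; rfl
  | @cons a c b h q ih =>
    intro hs
    have hsq : ∀ w ∈ q.support, w ∈ S := fun w hw => hs w (by simp [hw])
    have h1 : (G.induce S).Adj ⟨a, hs a (by simp)⟩ ⟨c, hsq c q.start_mem_support⟩ := by
      simpa using h
    exact h1.reachable.trans (ih hsq)

lemma walk_no_u (G : SimpleGraph V) (u v : V) (hpend : ∀ w : V, G.Adj u w ↔ w = v) :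
    ∀ {a b : V} (p : G.Walk a b), a ≠ u → b ≠ u → v ∉ p.support →
    ∀ w ∈ p.support, w ≠ u := by
  intro a b p
  induction p with
  | nil =>
    intro ha _ _ w hw
    simp only [Walk.support_nil, List.mem_singleton] at hw
    exact hw ▸ ha
  | @cons a c b h q ih =>
    intro ha hb hv w hw
    simp only [Walk.support_cons, List.mem_cons] at hw
    rcases hw with rfl | hw
    · exact ha
    · have hvq : v ∉ q.support := fun hq => hv (by simp [hq])
      have hc : c ≠ u := by
        rintro rfl
        have : a = v := (hpend a).mp h.symm
        exact hv (by simp [this, Walk.support_cons])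
      exact ih hc hb hvq w hw

lemma cut_dist (G : SimpleGraph V) (hG : G.Connected) (u v : V)
    (hpend : ∀ w : V, G.Adj u w ↔ w = v) (a b : V)
    (ha : a ∈ {w : V | w ≠ u ∧ w ≠ v}) (hb : b ∈ {w : V | w ≠ u ∧ w ≠ v})
    (hne : (G.induce {w : V | w ≠ u ∧ w ≠ v}).connectedComponentMk ⟨a, ha⟩ ≠
      (G.induce {w : V | w ≠ u ∧ w ≠ v}).connectedComponentMk ⟨b, hb⟩) :
    G.dist a b = G.dist a v + G.dist v b := by
  haveI := Classical.decEq V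
  refine le_antisymm (hG.dist_triangle) ?_
  obtain ⟨p, hp⟩ := hG.exists_walk_length_eq_dist a b
  by_cases hv : v ∈ p.support
  · have h1 : G.dist a v ≤ (p.takeUntil v hv).length := dist_le _
    have h2 : G.dist v b ≤ (p.dropUntil v hv).length := dist_le _
    have h3 : (p.takeUntil v hv).length + (p.dropUntil v hv).length = p.length := by
      have := congrArg Walk.length (p.take_spec hv)
      rwa [Walk.length_append] at this
    omega
  · exfalso
    have hnu : ∀ w ∈ p.support, w ≠ u := walk_no_u G u v hpend p ha.1 hb.1 hv
    have hs : ∀ w ∈ p.support, w ∈ {w : V | w ≠ u ∧ w ≠ v} :=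
      fun w hw => ⟨hnu w hw, fun h => hv (h ▸ hw)⟩
    exact hne (ConnectedComponent.sound (walk_reach_induce_s5 G _ p hs))

lemma nbr_in_comp (G : SimpleGraph V) (hG : G.Connected) (u v : V)
    (hpend : ∀ w : V, G.Adj u w ↔ w = v) :
    ∀ (d : ℕ) (x : V) (hx : x ∈ {w : V | w ≠ u ∧ w ≠ v}), G.dist v x = d →
    ∃ (n : V) (hn : n ∈ {w : V | w ≠ u ∧ w ≠ v}), G.dist v n = 1 ∧
      (G.induce {w : V | w ≠ u ∧ w ≠ v}).connectedComponentMk ⟨n, hn⟩ =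
      (G.induce {w : V | w ≠ u ∧ w ≠ v}).connectedComponentMk ⟨x, hx⟩ := by
  intro d
  induction d using Nat.strong_induction_on with
  | _ d ih =>
    intro x hx hd
    have hxv : x ≠ v := hx.2
    have hdpos : 0 < d := hd ▸ hG.pos_dist_of_ne (Ne.symm hxv)
    rcases Nat.lt_or_ge d 2 with hd2 | hd2
    · exact ⟨x, hx, by omega, rfl⟩
    · obtain ⟨p, hp⟩ := hG.exists_walk_length_eq_dist x v
      cases p with
      | nil => exact absurd rfl hxv
      | @cons _ c _ h q =>
        have hq : G.dist c v ≤ q.length := dist_le q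
        simp only [Walk.length_cons] at hp
        have hxc : G.dist x c ≤ 1 := dist_eq_one_iff_adj.mpr h ▸ le_refl _
        have hdxv : G.dist x v = d := dist_comm ▸ hd
        have hcvlow : d ≤ 1 + G.dist c v := by
          calc d = G.dist x v := hdxv.symm
            _ ≤ G.dist x c + G.dist c v := hG.dist_triangle
            _ ≤ 1 + G.dist c v := by omega
        have hcv : G.dist c v = d - 1 := by omega
        have hcnv : c ≠ v := by
          intro hcveq
          rw [hcveq, SimpleGraph.dist_self] at hcv
          omega
        have hcnu : c ≠ u := by
          rintro rfl
          exact hx.2 ((hpend x).mp h.symm)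
        have hcS : c ∈ {w : V | w ≠ u ∧ w ≠ v} := ⟨hcnu, hcnv⟩
        obtain ⟨n, hn, hn1, hncomp⟩ := ih (d-1) (by omega) c hcS (dist_comm ▸ hcv)
        refine ⟨n, hn, hn1, hncomp.trans ?_⟩
        have hadj : (G.induce {w : V | w ≠ u ∧ w ≠ v}).Adj ⟨c, hcS⟩ ⟨x, hx⟩ := by
          simpa using h.symm
        exact ConnectedComponent.sound hadj.reachable

end Helpers

theorem stmt5 {V : Type*} [Fintype V] (G : SimpleGraph V) (hG : G.Connected)
    (u v : V) (hpend : ∀ w : V, G.Adj u w ↔ w = v)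
    (hcut : ¬ (G.induce {w | w ≠ v}).Connected)
    (hcomp : 2 ≤ Nat.card (G.induce {w | w ≠ u ∧ w ≠ v}).ConnectedComponent) :
    ¬ IsBasisForced G u := by
  intro hforced
  have hadj : G.Adj u v := (hpend v).mpr rfl
  have huv : u ≠ v := G.ne_of_adj hadj
  have hd1 : G.dist u v = 1 := dist_eq_one_iff_adj.mpr hadj
  -- a metric basis exists
  have hres_univ : IsResolving G Set.univ := by
    intro x y hxy
    refine ⟨x, trivial, ?_⟩
    rw [SimpleGraph.dist_self]
    exact (hG.pos_dist_of_ne hxy).ne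
  have hmem := Nat.sInf_mem (⟨(Set.univ : Set V).ncard, Set.univ, hres_univ, rfl⟩ :
    Set.Nonempty {n | ∃ R : Set V, IsResolving G R ∧ R.ncard = n})
  obtain ⟨B, hBres, hBcard⟩ := hmem
  have hBbasis : IsMetricBasis G B := ⟨hBres, hBcard⟩
  have huB : u ∈ B := hforced B hBbasis
  set rest := B \ {u} with hrest_def
  have hBpos : 1 ≤ B.ncard := (Set.ncard_pos (Set.toFinite B)).mpr ⟨u, huB⟩
  have hrestcard : rest.ncard = B.ncard - 1 := Set.ncard_diff_singleton_of_mem huB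
  have hunotrest : u ∉ rest := fun h => h.2 rfl
  -- pendant distance
  have L1 : ∀ x : V, x ≠ u → G.dist u x = G.dist v x + 1 :=
    fun x hx => pend_dist G hG u v hpend x hx
  by_cases hres1 : IsResolving G (insert v rest)
  · by_cases hvB : v ∈ B
    · have hvrest : v ∈ rest := ⟨hvB, fun h => huv h.symm⟩
      rw [Set.insert_eq_self.mpr hvrest] at hres1
      have hle : metricDim G ≤ rest.ncard := Nat.sInf_le ⟨rest, hres1, rfl⟩
      have hBc : B.ncard = metricDim G := hBcard
      omega
    · have hvrest : v ∉ rest := fun h => hvB h.1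
      have hcard1 : (insert v rest).ncard = B.ncard := by
        rw [Set.ncard_insert_of_notMem hvrest (Set.toFinite rest)]
        omega
      have := hforced (insert v rest) ⟨hres1, hcard1.trans hBcard⟩
      rcases this with h | h
      · exact huv h
      · exact hunotrest h
  ·
    -- Case 2: (B \ {u}) ∪ {v} is not resolving; find the "twin" y of u
    unfold IsResolving at hres1
    push_neg at hres1
    obtain ⟨x, z, hxz, hallxz⟩ := hres1
    have hvu : G.dist v u = 1 := dist_comm.trans hd1
    have hxu : x = u ∨ z = u := by
      by_contra hcon
      push_neg at hcon
      obtain ⟨hx, hz⟩ := hcon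
      obtain ⟨r, hrB, hr⟩ := hBres x z hxz
      rcases eq_or_ne r u with rfl | hru
      · rw [L1 x hx, L1 z hz] at hr
        exact hr (by rw [hallxz v (Set.mem_insert v rest)])
      · exact hr (hallxz r (Set.mem_insert_of_mem _ ⟨hrB, by simp [hru]⟩))
    obtain ⟨y, hyu, hally⟩ : ∃ y, y ≠ u ∧ ∀ r ∈ insert v rest, G.dist r u = G.dist r y := by
      rcases hxu with rfl | rfl
      · exact ⟨z, Ne.symm hxz, hallxz⟩
      · exact ⟨x, hxz, fun r hr => (hallxz r hr).symm⟩
    have hvy : G.dist v y = 1 := (hally v (Set.mem_insert v rest)).symm.trans hvu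
    have hyv : y ≠ v := by
      intro heq
      rw [heq, SimpleGraph.dist_self] at hvy
      omega
    have hyS : y ∈ {w : V | w ≠ u ∧ w ≠ v} := ⟨hyu, hyv⟩
    have hrest_u : ∀ r ∈ rest, G.dist r u = G.dist r v + 1 := by
      intro r hr
      have hru : r ≠ u := by have := hr.2; simpa using this
      calc G.dist r u = G.dist u r := dist_comm
        _ = G.dist v r + 1 := L1 r hru
        _ = G.dist r v + 1 := by rw [dist_comm]
    have hrest_y : ∀ r ∈ rest, G.dist r y = G.dist r v + 1 := fun r hr =>
      (hally r (Set.mem_insert_of_mem _ hr)).symm.trans (hrest_u r hr)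
    have hynrest : y ∉ rest := by
      intro h
      have := hrest_y y h
      rw [SimpleGraph.dist_self] at this
      omega
    have hynB : y ∉ B := fun h => hynrest ⟨h, by simp [hyu]⟩
    -- another component and a neighbour of v in it
    haveI : Nontrivial ((G.induce {w : V | w ≠ u ∧ w ≠ v}).ConnectedComponent) :=
      Finite.one_lt_card_iff_nontrivial.mp hcomp
    obtain ⟨c', hc'⟩ :=
      exists_ne ((G.induce {w : V | w ≠ u ∧ w ≠ v}).connectedComponentMk ⟨y, hyS⟩)
    obtain ⟨⟨x', hx'S⟩, hx'c⟩ := c'.exists_rep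
    obtain ⟨n, hnS, hvn, hncomp⟩ := nbr_in_comp G hG u v hpend (G.dist v x') x' hx'S rfl
    have hncy : (G.induce {w : V | w ≠ u ∧ w ≠ v}).connectedComponentMk ⟨n, hnS⟩ ≠
        (G.induce {w : V | w ≠ u ∧ w ≠ v}).connectedComponentMk ⟨y, hyS⟩ := by
      rw [hncomp]
      exact fun h => hc' (hx'c.symm.trans h)
    have hyn : y ≠ n := by rintro rfl; exact hncy rfl
    -- Lemma A: a basis vertex r₀ in the component of n
    obtain ⟨r₀, hr₀B, hr₀ne⟩ := hBres y n hyn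
    have hr₀u : r₀ ≠ u := by
      intro heq
      rw [heq, L1 y hyu, L1 n hnS.1, hvy, hvn] at hr₀ne
      exact hr₀ne rfl
    have hr₀rest : r₀ ∈ rest := ⟨hr₀B, by simp [hr₀u]⟩
    have hr₀v : r₀ ≠ v := by
      intro heq
      rw [heq, hvy, hvn] at hr₀ne
      exact hr₀ne rfl
    have hr₀S : r₀ ∈ {w : V | w ≠ u ∧ w ≠ v} := ⟨hr₀u, hr₀v⟩
    have hr₀n : (G.induce {w : V | w ≠ u ∧ w ≠ v}).connectedComponentMk ⟨r₀, hr₀S⟩ =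
        (G.induce {w : V | w ≠ u ∧ w ≠ v}).connectedComponentMk ⟨n, hnS⟩ := by
      by_contra hcon
      have hcd := cut_dist G hG u v hpend r₀ n hr₀S hnS hcon
      rw [hvn] at hcd
      exact hr₀ne ((hrest_y r₀ hr₀rest).trans hcd.symm)
    have hr₀y : (G.induce {w : V | w ≠ u ∧ w ≠ v}).connectedComponentMk ⟨r₀, hr₀S⟩ ≠
        (G.induce {w : V | w ≠ u ∧ w ≠ v}).connectedComponentMk ⟨y, hyS⟩ := by
      rw [hr₀n]; exact hncy
    -- distances across the cut vertex
    have ycross : ∀ x : V, (∀ hxS : x ∈ {w : V | w ≠ u ∧ w ≠ v},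
        (G.induce {w : V | w ≠ u ∧ w ≠ v}).connectedComponentMk ⟨x, hxS⟩ ≠
        (G.induce {w : V | w ≠ u ∧ w ≠ v}).connectedComponentMk ⟨y, hyS⟩) →
        G.dist y x = G.dist v x + 1 := by
      intro x hx
      rcases eq_or_ne x u with heq | hxu2
      · rw [heq]
        calc G.dist y u = G.dist u y := dist_comm
          _ = G.dist v y + 1 := L1 y hyu
          _ = G.dist v u + 1 := by rw [hvy, hvu]
      rcases eq_or_ne x v with heq | hxv2
      · rw [heq]
        calc G.dist y v = G.dist v y := dist_comm
          _ = G.dist v v + 1 := by rw [hvy, SimpleGraph.dist_self]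
      · have hxS : x ∈ {w : V | w ≠ u ∧ w ≠ v} := ⟨hxu2, hxv2⟩
        have hcd := cut_dist G hG u v hpend y x hyS hxS (Ne.symm (hx hxS))
        have hyv1 : G.dist y v = 1 := dist_comm.trans hvy
        omega
    have rcross : ∀ x : V, (∀ hxS : x ∈ {w : V | w ≠ u ∧ w ≠ v},
        (G.induce {w : V | w ≠ u ∧ w ≠ v}).connectedComponentMk ⟨x, hxS⟩ ≠
        (G.induce {w : V | w ≠ u ∧ w ≠ v}).connectedComponentMk ⟨r₀, hr₀S⟩) →
        G.dist r₀ x = G.dist r₀ v + G.dist v x := by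
      intro x hx
      rcases eq_or_ne x u with heq | hxu2
      · rw [heq, hrest_u r₀ hr₀rest, hvu]
      rcases eq_or_ne x v with heq | hxv2
      · rw [heq]
        simp [SimpleGraph.dist_self]
      · exact cut_dist G hG u v hpend r₀ x hr₀S ⟨hxu2, hxv2⟩ (Ne.symm (hx ⟨hxu2, hxv2⟩))
    -- key lemma 1: pairs (u, b)
    have key1 : ∀ b : V, b ≠ u → b ≠ y → (∀ r ∈ rest, G.dist r u = G.dist r b) →
        G.dist y b ≠ 2 := by
      intro b hbu hby hball
      have hball' : ∀ r ∈ rest, G.dist r b = G.dist r v + 1 := fun r hr =>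
        (hball r hr).symm.trans (hrest_u r hr)
      have hbv : b ≠ v := by
        intro heq
        have h0 := hball' r₀ hr₀rest
        rw [heq] at h0
        omega
      have hbS : b ∈ {w : V | w ≠ u ∧ w ≠ v} := ⟨hbu, hbv⟩
      have hvb : G.dist v b ≠ 1 := by
        intro hvb1
        obtain ⟨s, hsB, hs⟩ := hBres y b (Ne.symm hby)
        rcases eq_or_ne s u with heq | hsu
        · rw [heq, L1 y hyu, L1 b hbu, hvy, hvb1] at hs
          exact hs rfl
        · have hsrest : s ∈ rest := ⟨hsB, by simp [hsu]⟩
          exact hs ((hrest_y s hsrest).trans (hball' s hsrest).symm)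
      by_cases hbc : (G.induce {w : V | w ≠ u ∧ w ≠ v}).connectedComponentMk ⟨b, hbS⟩ =
          (G.induce {w : V | w ≠ u ∧ w ≠ v}).connectedComponentMk ⟨r₀, hr₀S⟩
      · have hyb : G.dist y b = G.dist v b + 1 :=
          ycross b (fun hbS' h => hr₀y (hbc.symm.trans h))
        omega
      · have hrb := rcross b (fun hbS' h => hbc h)
        have := hball' r₀ hr₀rest
        exact absurd (by omega : G.dist v b = 1) hvb
    -- key lemma 2': asymmetric version for pairs not involving u
    have key2' : ∀ a b : V, (hbS : b ∈ {w : V | w ≠ u ∧ w ≠ v}) →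
        (G.induce {w : V | w ≠ u ∧ w ≠ v}).connectedComponentMk ⟨b, hbS⟩ =
        (G.induce {w : V | w ≠ u ∧ w ≠ v}).connectedComponentMk ⟨y, hyS⟩ →
        (∀ r ∈ rest, G.dist r a = G.dist r b) → G.dist v a ≠ G.dist v b →
        G.dist y a ≠ G.dist y b := by
      intro a b hbS hbc hall hvab
      have hrb : G.dist r₀ b = G.dist r₀ v + G.dist v b :=
        rcross b (fun hbS' h => hr₀y (h.symm.trans hbc))
      have hra : G.dist r₀ a = G.dist r₀ b := hall r₀ hr₀rest
      by_cases hac : ∃ haS : a ∈ {w : V | w ≠ u ∧ w ≠ v},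
          (G.induce {w : V | w ≠ u ∧ w ≠ v}).connectedComponentMk ⟨a, haS⟩ =
          (G.induce {w : V | w ≠ u ∧ w ≠ v}).connectedComponentMk ⟨r₀, hr₀S⟩
      · obtain ⟨haS, hac⟩ := hac
        have hya : G.dist y a = G.dist v a + 1 :=
          ycross a (fun haS' h => hr₀y (hac.symm.trans h))
        intro heq
        have ht1 : G.dist y b ≤ G.dist y v + G.dist v b := hG.dist_triangle
        have hyv1 : G.dist y v = 1 := dist_comm.trans hvy
        have ht2 : G.dist r₀ a ≤ G.dist r₀ v + G.dist v a := hG.dist_triangle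
        exact hvab (by omega)
      · have hra2 : G.dist r₀ a = G.dist r₀ v + G.dist v a :=
          rcross a (fun haS h => hac ⟨haS, h⟩)
        exact absurd (by omega : G.dist v a = G.dist v b) hvab
    -- key lemma 2
    have key2 : ∀ a b : V, a ≠ u → b ≠ u → (∀ r ∈ rest, G.dist r a = G.dist r b) →
        G.dist v a ≠ G.dist v b → G.dist y a ≠ G.dist y b := by
      intro a b hau hbu hall hvab
      by_cases hbc : ∃ hbS : b ∈ {w : V | w ≠ u ∧ w ≠ v},
          (G.induce {w : V | w ≠ u ∧ w ≠ v}).connectedComponentMk ⟨b, hbS⟩ =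
          (G.induce {w : V | w ≠ u ∧ w ≠ v}).connectedComponentMk ⟨y, hyS⟩
      · obtain ⟨hbS, hbc⟩ := hbc
        exact key2' a b hbS hbc hall hvab
      by_cases hac : ∃ haS : a ∈ {w : V | w ≠ u ∧ w ≠ v},
          (G.induce {w : V | w ≠ u ∧ w ≠ v}).connectedComponentMk ⟨a, haS⟩ =
          (G.induce {w : V | w ≠ u ∧ w ≠ v}).connectedComponentMk ⟨y, hyS⟩
      · obtain ⟨haS, hac⟩ := hac
        exact (key2' b a haS hac (fun r hr => (hall r hr).symm) (Ne.symm hvab)).symm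
      · have h1 := ycross a (fun haS h => hac ⟨haS, h⟩)
        have h2 := ycross b (fun hbS h => hbc ⟨hbS, h⟩)
        intro heq
        exact hvab (by omega)
    -- the replacement set is resolving
    have hyu2 : G.dist y u = 2 := by
      calc G.dist y u = G.dist u y := dist_comm
        _ = G.dist v y + 1 := L1 y hyu
        _ = 2 := by rw [hvy]
    have hres2 : IsResolving G (insert y rest) := by
      intro a b hab
      by_cases hre : ∃ r ∈ rest, G.dist r a ≠ G.dist r b
      · obtain ⟨r, hr, h⟩ := hre
        exact ⟨r, Set.mem_insert_of_mem _ hr, h⟩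
      · push_neg at hre
        have huab : G.dist u a ≠ G.dist u b := by
          obtain ⟨r, hrB, h⟩ := hBres a b hab
          rcases eq_or_ne r u with rfl | hru
          · exact h
          · exact absurd (hre r ⟨hrB, by simp [hru]⟩) h
        refine ⟨y, Set.mem_insert y rest, ?_⟩
        rcases eq_or_ne a u with heq | hau
        · rw [heq] at hre hab ⊢
          rcases eq_or_ne b y with heq2 | hby
          · rw [heq2, hyu2, SimpleGraph.dist_self]
            omega
          · have hk := key1 b (Ne.symm hab) hby hre
            rw [hyu2]
            exact fun h => hk h.symm
        rcases eq_or_ne b u with heq | hbu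
        · rw [heq] at hre hab ⊢
          rcases eq_or_ne a y with heq2 | hay
          · rw [heq2, hyu2, SimpleGraph.dist_self]
            omega
          · have hk := key1 a hau hay (fun r hr => (hre r hr).symm)
            rw [hyu2]
            exact hk
        · have hvab : G.dist v a ≠ G.dist v b := by
            rw [L1 a hau, L1 b hbu] at huab
            omega
          exact key2 a b hau hbu hre hvab
    have hcard2 : (insert y rest).ncard = B.ncard := Set.ncard_exchange hynB huB
    have humem := hforced (insert y rest) ⟨hres2, hcard2.trans hBcard⟩
    rcases humem with h | h
    · exact hyu h.symm
    · exact hunotrest h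
end

section
/- Let G be a connected graph not isomorphic to a path, and let u be a pendant vertex adjacent to a cut-vertex v with deg(v) = 2. Then u is not a basis forced vertex of G. -/
open SimpleGraph

/-!
Let `u` be a pendant vertex with neighbour `v`, and let `x` be the other neighbour of `v`.
A shortest path from `u` to any `z ∉ {u, v}` runs through `v` and then `x`, so `d(u, z) = d(v, z) + 1` for
`z ≠ u` and `d(v, z) = d(x, z) + 1` for `z ∉ {u, v}`. Hence, in a metric basis `W ∋ u`, the
vertex `v` separates every pair that `u` separates except `{u, x}`, and exchanging `u` for `v`
(or for `x` when `v ∈ W` already) gives a metric basis avoiding `u`. The exchange fails only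
when `W = {u}`; then `d(u, ·)` is injective, so every vertex lies on a shortest path from `u` to
a vertex `w` farthest from `u`, and `{w}` is a metric basis.
-/

section

variable {V : Type*} {G : SimpleGraph V}

lemma IsResolving.mono {R S : Set V} (hR : IsResolving G R) (hRS : R ⊆ S) : IsResolving G S :=
  fun a b hab ↦ (hR a b hab).imp fun _ ⟨hr, hd⟩ ↦ ⟨hRS hr, hd⟩

lemma isResolving_univ (hG : G.Preconnected) : IsResolving G Set.univ := fun a b hab ↦
  ⟨a, trivial, by rw [dist_self]; exact ((hG a b).pos_dist_of_ne hab).ne⟩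

lemma metricDim_le_ncard {R : Set V} (hR : IsResolving G R) : metricDim G ≤ R.ncard :=
  Nat.sInf_le ⟨R, hR, rfl⟩

lemma exists_isMetricBasis (hG : G.Preconnected) : ∃ W, IsMetricBasis G W :=
  Nat.sInf_mem (s := {n | ∃ R : Set V, IsResolving G R ∧ R.ncard = n})
    ⟨_, Set.univ, isResolving_univ hG, rfl⟩

lemma IsMetricBasis.insert_sdiff_singleton [Finite V] {W : Set V} {u y : V}
    (hW : IsMetricBasis G W) (hu : u ∈ W) (hres : IsResolving G (insert y (W \ {u}))) :
    IsMetricBasis G (insert y (W \ {u})) := by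
  refine ⟨hres, le_antisymm ?_ (metricDim_le_ncard hres)⟩
  calc (insert y (W \ {u})).ncard ≤ (W \ {u}).ncard + 1 := Set.ncard_insert_le _ _
    _ = metricDim G := by rw [Set.ncard_sdiff_singleton_add_one hu, hW.2]

namespace SimpleGraph

lemma Reachable.exists_adj_dist_eq_dist_add_one {a z : V} (h : G.Reachable a z) (hne : a ≠ z) :
    ∃ w, G.Adj a w ∧ G.dist a z = G.dist w z + 1 := by
  obtain ⟨p, hp⟩ := h.exists_walk_length_eq_dist
  cases p with
  | nil => exact absurd rfl hne
  | @cons _ w _ hadj q =>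
    refine ⟨w, hadj, le_antisymm ?_ ?_⟩
    · simpa [dist_eq_one_iff_adj.2 hadj, add_comm] using q.reachable.dist_triangle_right a
    · have := dist_le q
      rw [Walk.length_cons] at hp
      omega

lemma Walk.dist_getVert_of_length_eq_dist_s6 {u w : V} (p : G.Walk u w)
    (hp : p.length = G.dist u w) {k : ℕ} (hk : k ≤ p.length) :
    G.dist u (p.getVert k) = k ∧ G.dist (p.getVert k) w = p.length - k := by
  have hbefore : G.dist u (p.getVert k) ≤ k := by
    simpa [Walk.take_length, hk] using dist_le (p.take k)
  have hafter : G.dist (p.getVert k) w ≤ p.length - k := by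
    simpa [Walk.drop_length] using dist_le (p.drop k)
  have htri := (p.drop k).reachable.dist_triangle_right u
  omega

lemma exists_neighborSet_eq_pair {u v : V} (huv : G.Adj v u) (hdeg : (G.neighborSet v).ncard = 2) :
    ∃ x, x ≠ u ∧ G.neighborSet v = {u, x} := by
  have hu : u ∈ G.neighborSet v := huv
  have hfin : (G.neighborSet v).Finite := Set.finite_of_ncard_pos (by rw [hdeg]; norm_num)
  have hone : (G.neighborSet v \ {u}).ncard = 1 := by
    have := Set.ncard_sdiff_singleton_add_one hu hfin
    omega
  obtain ⟨x, hx⟩ := Set.ncard_eq_one.1 hone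
  refine ⟨x, fun hxu ↦ ?_, ?_⟩
  · have hmem : x ∈ G.neighborSet v \ {u} := hx ▸ rfl
    exact hmem.2 hxu
  · rw [← hx, Set.insert_sdiff_singleton, Set.insert_eq_of_mem hu]

end SimpleGraph

lemma IsResolving.singleton_of_forall_dist_le (hG : G.Connected) {u w : V}
    (hu : IsResolving G {u}) (hw : ∀ z, G.dist u z ≤ G.dist u w) : IsResolving G {w} := by
  have hinj : Function.Injective (G.dist u) := fun a b hab ↦ by
    by_contra hne
    obtain ⟨r, rfl, hr⟩ := hu a b hne
    exact hr hab
  obtain ⟨p, hp⟩ := hG.exists_walk_length_eq_dist u w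
  -- By injectivity, `z` is the vertex of the shortest path `p` at position `d(u, z)`.
  have hdist : ∀ z, G.dist w z = G.dist u w - G.dist u z := fun z ↦ by
    obtain ⟨hpos, hrest⟩ := p.dist_getVert_of_length_eq_dist_s6 hp (hp ▸ hw z)
    rw [hinj hpos] at hrest
    rw [dist_comm, hrest, hp]
  intro a b hab
  refine ⟨w, rfl, ?_⟩
  rw [hdist, hdist]
  have := hw a
  have := hw b
  have := hinj.ne hab
  omega

section Pendant

variable {u v x : V} (hpend : ∀ w, G.Adj u w ↔ w = v)
include hpend

lemma dist_support_pendant_eq_one : G.dist v u = 1 :=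
  dist_eq_one_iff_adj.2 ((hpend v).2 rfl).symm

variable (hG : G.Connected)
include hG

lemma dist_pendant_eq_dist_add_one {z : V} (hz : z ≠ u) : G.dist u z = G.dist v z + 1 := by
  obtain ⟨w, hw, h⟩ := (hG.preconnected u z).exists_adj_dist_eq_dist_add_one hz.symm
  rwa [(hpend w).1 hw] at h

variable (hnbr : G.neighborSet v = {u, x})
include hnbr

lemma dist_support_eq_dist_add_one {z : V} (hzu : z ≠ u) (hzv : z ≠ v) :
    G.dist v z = G.dist x z + 1 := by
  obtain ⟨w, hw, h⟩ := (hG.preconnected v z).exists_adj_dist_eq_dist_add_one hzv.symm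
  have hw' : w ∈ G.neighborSet v := hw
  rw [hnbr] at hw'
  rcases hw' with rfl | rfl
  · have := dist_pendant_eq_dist_add_one hpend hG hzu
    omega
  · exact h

lemma eq_pendant_pair_of_dist_eq {p q : V} (hu : G.dist u p ≠ G.dist u q)
    (hv : G.dist v p = G.dist v q) : p = u ∧ q = x ∨ p = x ∧ q = u := by
  have hother : ∀ y, y ≠ u → G.dist v y = G.dist v u → y = x := fun y hyu hy ↦ by
    rw [dist_support_pendant_eq_one hpend, dist_eq_one_iff_adj] at hy
    have hy' : y ∈ G.neighborSet v := hy
    rw [hnbr] at hy'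
    exact hy'.resolve_left hyu
  by_cases hp : p = u
  · subst hp
    exact .inl ⟨rfl, hother q (fun h ↦ hu (h ▸ rfl)) hv.symm⟩
  by_cases hq : q = u
  · subst hq
    exact .inr ⟨hother p hp hv, rfl⟩
  rw [dist_pendant_eq_dist_add_one hpend hG hp, dist_pendant_eq_dist_add_one hpend hG hq, hv] at hu
  exact absurd rfl hu

lemma IsResolving.of_sdiff_pendant_subset {W W' : Set V} (hW : IsResolving G W)
    (hsub : W \ {u} ⊆ W') (hv : v ∈ W') (hsep : ∃ r ∈ W', G.dist r u ≠ G.dist r x) :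
    IsResolving G W' := by
  intro p q hpq
  obtain ⟨r, hrW, hr⟩ := hW p q hpq
  by_cases hru : r = u
  · subst hru
    by_cases hvpq : G.dist v p = G.dist v q
    · obtain ⟨s, hs, hsd⟩ := hsep
      rcases eq_pendant_pair_of_dist_eq hpend hG hnbr hr hvpq with ⟨rfl, rfl⟩ | ⟨rfl, rfl⟩
      · exact ⟨s, hs, hsd⟩
      · exact ⟨s, hs, hsd.symm⟩
    · exact ⟨v, hv, hvpq⟩
  · exact ⟨r, hsub ⟨hrW, hru⟩, hr⟩

lemma IsResolving.exists_insert_sdiff_pendant [Finite V] (hxu : x ≠ u) {W : Set V}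
    (hW : IsResolving G W) : ∃ y, y ≠ u ∧ IsResolving G (insert y (W \ {u})) := by
  have huv : u ≠ v := ((hpend v).2 rfl).ne
  by_cases hvW : v ∈ W
  · refine ⟨x, hxu, hW.of_sdiff_pendant_subset hpend hG hnbr (Set.subset_insert _ _)
      (Set.mem_insert_of_mem _ ⟨hvW, huv.symm⟩) ⟨x, Set.mem_insert _ _, ?_⟩⟩
    rw [dist_self]
    exact (hG.pos_dist_of_ne hxu).ne'
  by_cases hrest : ∃ r ∈ W, r ≠ u
  · obtain ⟨r, hrW, hru⟩ := hrest
    have hrv : r ≠ v := fun h ↦ hvW (h ▸ hrW)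
    refine ⟨v, huv.symm, hW.of_sdiff_pendant_subset hpend hG hnbr (Set.subset_insert _ _)
      (Set.mem_insert _ _) ⟨r, Set.mem_insert_of_mem _ ⟨hrW, hru⟩, ?_⟩⟩
    rw [dist_comm, dist_pendant_eq_dist_add_one hpend hG hru,
      dist_support_eq_dist_add_one hpend hG hnbr hru hrv, dist_comm]
    omega
  replace hrest : W ⊆ {u} := by simpa using hrest
  have : Nonempty V := ⟨u⟩
  obtain ⟨w, hw⟩ := Finite.exists_max (G.dist u)
  have hwu : w ≠ u := by
    rintro rfl
    have := hw v
    rw [dist_comm, dist_support_pendant_eq_one hpend, dist_self] at this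
    omega
  refine ⟨w, hwu, ?_⟩
  rw [Set.sdiff_eq_empty.2 hrest, insert_empty_eq]
  exact (hW.mono hrest).singleton_of_forall_dist_le hG hw

end Pendant

end

theorem stmt6_general {V : Type*} [Fintype V] (G : SimpleGraph V) (hG : G.Connected)
    (u v : V) (hpend : ∀ w : V, G.Adj u w ↔ w = v)
    (hdeg : (G.neighborSet v).ncard = 2) :
    ¬ IsBasisForced G u := by
  intro hforced
  obtain ⟨x, hxu, hnbr⟩ := exists_neighborSet_eq_pair ((hpend v).2 rfl).symm hdeg
  obtain ⟨W, hW⟩ := exists_isMetricBasis hG.preconnected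
  obtain ⟨y, hyu, hres⟩ := hW.1.exists_insert_sdiff_pendant hpend hG hnbr hxu
  rcases hforced _ (hW.insert_sdiff_singleton (hforced W hW) hres) with h | h
  · exact hyu h.symm
  · exact h.2 rfl

theorem stmt6 {V : Type*} [Fintype V] (G : SimpleGraph V) (hG : G.Connected)
    (hnpath : ∀ n : ℕ, ¬ Nonempty (G ≃g pathGraph n))
    (u v : V) (hpend : ∀ w : V, G.Adj u w ↔ w = v)
    (hcut : ¬ (G.induce {w | w ≠ v}).Connected)
    (hdeg : (G.neighborSet v).ncard = 2) :
    ¬ IsBasisForced G u :=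
  stmt6_general G hG u v hpend hdeg
end

section
/- Let G be a connected graph with a universal vertex v (a vertex adjacent to all other vertices). Then v is not a basis forced vertex: there exists a metric basis of G not containing v. -/
open SimpleGraph

theorem stmt10 {V : Type*} [Fintype V] (G : SimpleGraph V) (hG : G.Connected)
    (hcard : 2 ≤ Fintype.card V)
    (v : V) (huniv : ∀ u : V, u ≠ v → G.Adj v u) :
    ∃ R : Set V, IsMetricBasis G R ∧ v ∉ R := by
  classical
  -- dist from v to any other vertex is 1
  have hdv : ∀ u : V, u ≠ v → G.dist v u = 1 := fun u hu =>
    (G.dist_eq_one_iff_adj).mpr (huniv u hu)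
  have hdv' : ∀ u : V, u ≠ v → G.dist u v = 1 := fun u hu => by
    rw [G.dist_comm]; exact hdv u hu
  -- the whole vertex set is resolving
  have huniv_res : IsResolving G (Set.univ : Set V) := by
    intro x y hxy
    refine ⟨x, Set.mem_univ x, ?_⟩
    rw [G.dist_self]
    exact (hG.pos_dist_of_ne hxy).ne
  have hne : {n | ∃ R : Set V, IsResolving G R ∧ R.ncard = n}.Nonempty :=
    ⟨(Set.univ : Set V).ncard, Set.univ, huniv_res, rfl⟩
  -- a metric basis exists
  obtain ⟨B, hBres, hBcard⟩ := Nat.sInf_mem hne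
  have hBcard : B.ncard = metricDim G := hBcard
  by_cases hvB : v ∈ B
  · -- B \ {v} is not resolving (it would be smaller)
    have hBfin : B.Finite := Set.toFinite B
    have hcard_lt : (B \ {v}).ncard < B.ncard := by
      have := Set.ncard_diff_singleton_lt_of_mem hvB hBfin
      exact this
    have hnotres : ¬ IsResolving G (B \ {v}) := by
      intro hres
      have hle : metricDim G ≤ (B \ {v}).ncard :=
        Nat.sInf_le ⟨B \ {v}, hres, rfl⟩
      omega
    -- get an unresolved pair
    rw [IsResolving] at hnotres
    push_neg at hnotres
    obtain ⟨x, y, hxy, hxyr⟩ := hnotres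
    -- B resolves it, and only v can, so one of x, y is v
    obtain ⟨r, hrB, hr⟩ := hBres x y hxy
    have hrv : r = v := by
      by_contra h
      exact hr (hxyr r ⟨hrB, h⟩)
    rw [hrv] at hr
    -- let y₀ be the non-v element of the pair
    have key : ∃ y₀ : V, y₀ ≠ v ∧ ∀ s ∈ B \ {v}, G.dist s y₀ = G.dist s v := by
      by_cases hx : x = v
      · exact ⟨y, fun h => hxy (hx.trans h.symm), fun s hs => ((hxyr s hs).symm.trans (by rw [hx]))⟩
      · refine ⟨x, hx, fun s hs => ?_⟩
        have hy : y = v := by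
          by_contra hy
          exact hr (by rw [hdv x hx, hdv y hy])
        rw [← hy]; exact hxyr s hs
    obtain ⟨y₀, hy₀v, hy₀⟩ := key
    -- every s ∈ B \ {v} has dist s y₀ = 1, so y₀ ∉ B
    have hdist1 : ∀ s ∈ B \ {v}, G.dist s y₀ = 1 := by
      intro s hs
      rw [hy₀ s hs]
      exact hdv' s hs.2
    have hy₀B : y₀ ∉ B := by
      intro hy₀B
      have h1 := hdist1 y₀ ⟨hy₀B, hy₀v⟩
      rw [G.dist_self] at h1
      exact one_ne_zero h1.symm
    -- the new set
    refine ⟨insert y₀ (B \ {v}), ⟨?_, ?_⟩, ?_⟩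
    · -- resolving
      intro a b hab
      by_cases hres : ∃ s ∈ B \ {v}, G.dist s a ≠ G.dist s b
      · obtain ⟨s, hs, hsab⟩ := hres
        exact ⟨s, Set.mem_insert_of_mem _ hs, hsab⟩
      · push_neg at hres
        obtain ⟨s, hsB, hs⟩ := hBres a b hab
        have hsv : s = v := by
          by_contra h
          exact hs (hres s ⟨hsB, h⟩)
        rw [hsv] at hs
        -- one of a, b is v; the other equals y₀ by uniqueness
        have keyab : ∀ c : V, c ≠ v → (∀ t ∈ B \ {v}, G.dist t c = G.dist t v) → c = y₀ := by
          intro c hcv hc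
          by_contra hcy
          obtain ⟨t, htB, ht⟩ := hBres c y₀ hcy
          by_cases htv : t = v
          · rw [htv, hdv c hcv, hdv y₀ hy₀v] at ht
            exact ht rfl
          · have h1 : G.dist t c = 1 := by
              rw [hc t ⟨htB, htv⟩]; exact hdv' t htv
            rw [h1, hdist1 t ⟨htB, htv⟩] at ht
            exact ht rfl
        by_cases hav : a = v
        · have hbv : b ≠ v := fun h => hab (hav.trans h.symm)
          have hb : b = y₀ := keyab b hbv (fun t ht => (hres t ht).symm.trans (by rw [hav]))
          refine ⟨y₀, Set.mem_insert _ _, ?_⟩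
          rw [hav, hb, G.dist_self, hdv' y₀ hy₀v]
          exact one_ne_zero
        · have hbv : b = v := by
            by_contra hbv
            exact hs (by rw [hdv a hav, hdv b hbv])
          have ha : a = y₀ := keyab a hav (fun t ht => (hres t ht).trans (by rw [hbv]))
          refine ⟨y₀, Set.mem_insert _ _, ?_⟩
          rw [hbv, ha, G.dist_self, hdv' y₀ hy₀v]
          exact zero_ne_one
    · -- cardinality
      have h1 : (insert y₀ (B \ {v})).ncard = (B \ {v}).ncard + 1 :=
        Set.ncard_insert_of_notMem (fun h => hy₀B h.1) (Set.toFinite _)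
      have h2 : (B \ {v}).ncard + 1 = B.ncard := by
        have := Set.ncard_diff_singleton_add_one hvB hBfin
        exact this
      rw [h1, h2, hBcard]
    · -- v not in the new set
      intro hv
      rcases hv with h | h
      · exact hy₀v h.symm
      · exact h.2 rfl
  · exact ⟨B, ⟨hBres, hBcard⟩, hvB⟩
end

section
/- Let G be a connected graph with at least 5 vertices whose complement has a connected component isomorphic to the path P_4 on four vertices. Then no vertex of that component is a basis forced vertex of G. -/
open SimpleGraph

theorem stmt13 {V : Type*} [Fintype V] (G : SimpleGraph V) (hG : G.Connected)
    (hcard : 5 ≤ Fintype.card V)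
    (C : Gᶜ.ConnectedComponent)
    (hiso : Nonempty ((Gᶜ.induce C.supp) ≃g pathGraph 4)) :
    ∀ v ∈ C.supp, ¬ IsBasisForced G v := by
  classical
  obtain ⟨φ⟩ := hiso
  intro v hv hforced
  -- the four vertices of the component
  obtain ⟨A, hAdef⟩ : ∃ a : V, a = ((φ.symm 0 : C.supp) : V) := ⟨_, rfl⟩
  obtain ⟨B, hBdef⟩ : ∃ a : V, a = ((φ.symm 1 : C.supp) : V) := ⟨_, rfl⟩
  obtain ⟨P, hPdef⟩ : ∃ a : V, a = ((φ.symm 2 : C.supp) : V) := ⟨_, rfl⟩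
  obtain ⟨D, hDdef⟩ : ∃ a : V, a = ((φ.symm 3 : C.supp) : V) := ⟨_, rfl⟩
  have hA : A ∈ C.supp := hAdef ▸ (φ.symm 0).2
  have hB : B ∈ C.supp := hBdef ▸ (φ.symm 1).2
  have hP : P ∈ C.supp := hPdef ▸ (φ.symm 2).2
  have hD : D ∈ C.supp := hDdef ▸ (φ.symm 3).2
  have hinj : ∀ i j : Fin 4, ((φ.symm i : C.supp) : V) = ((φ.symm j : C.supp) : V) → i = j := by
    intro i j h
    exact φ.symm.injective (Subtype.val_injective h)
  have neAB : A ≠ B := fun h => by rw [hAdef, hBdef] at h; simpa using hinj 0 1 h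
  have neAP : A ≠ P := fun h => by rw [hAdef, hPdef] at h; simpa using hinj 0 2 h
  have neAD : A ≠ D := fun h => by rw [hAdef, hDdef] at h; simpa using hinj 0 3 h
  have neBP : B ≠ P := fun h => by rw [hBdef, hPdef] at h; simpa using hinj 1 2 h
  have neBD : B ≠ D := fun h => by rw [hBdef, hDdef] at h; simpa using hinj 1 3 h
  have nePD : P ≠ D := fun h => by rw [hPdef, hDdef] at h; simpa using hinj 2 3 h
  -- every element of the component is one of A B P D
  have hmem : ∀ x ∈ C.supp, x = A ∨ x = B ∨ x = P ∨ x = D := by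
    intro x hx
    have : x = ((φ.symm (φ ⟨x, hx⟩) : C.supp) : V) := by rw [φ.symm_apply_apply]
    obtain ⟨i, hi⟩ : ∃ i, φ ⟨x, hx⟩ = i := ⟨_, rfl⟩
    rw [hi] at this
    fin_cases i
    · exact Or.inl (this.trans hAdef.symm)
    · exact Or.inr (Or.inl (this.trans hBdef.symm))
    · exact Or.inr (Or.inr (Or.inl (this.trans hPdef.symm)))
    · exact Or.inr (Or.inr (Or.inr (this.trans hDdef.symm)))
  -- complement adjacency inside the component
  have hadj : ∀ i j : Fin 4, Gᶜ.Adj ((φ.symm i : C.supp) : V) ((φ.symm j : C.supp) : V) ↔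
      i.val + 1 = j.val ∨ j.val + 1 = i.val := by
    intro i j
    rw [← pathGraph_adj]
    conv_rhs => rw [← φ.apply_symm_apply i, ← φ.apply_symm_apply j]
    rw [φ.map_adj_iff]
    exact Iff.rfl
  have cAB : Gᶜ.Adj A B := by rw [hAdef, hBdef]; exact (hadj 0 1).mpr (by decide)
  have cBP : Gᶜ.Adj B P := by rw [hBdef, hPdef]; exact (hadj 1 2).mpr (by decide)
  have cPD : Gᶜ.Adj P D := by rw [hPdef, hDdef]; exact (hadj 2 3).mpr (by decide)
  have nAP : ¬ Gᶜ.Adj A P := by rw [hAdef, hPdef, hadj 0 2]; decide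
  have nAD : ¬ Gᶜ.Adj A D := by rw [hAdef, hDdef, hadj 0 3]; decide
  have nBD : ¬ Gᶜ.Adj B D := by rw [hBdef, hDdef, hadj 1 3]; decide
  -- adjacency transfer
  have hGadj : ∀ x y : V, x ≠ y → ¬ Gᶜ.Adj x y → G.Adj x y := by
    intro x y h1 h2
    rw [← compl_compl G]
    exact (SimpleGraph.compl_adj _ _ _).mpr ⟨h1, h2⟩
  have hGnadj : ∀ x y : V, Gᶜ.Adj x y → ¬ G.Adj x y := fun x y h =>
    ((SimpleGraph.compl_adj _ _ _).mp h).2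
  -- vertices inside the component are adjacent (in G) to everything outside
  have hout : ∀ x ∈ C.supp, ∀ y, y ∉ C.supp → G.Adj x y := by
    intro x hx y hy
    refine hGadj x y (fun h => hy (h ▸ hx)) (fun h => hy ?_)
    rw [ConnectedComponent.mem_supp_iff] at hx ⊢
    rw [← hx]
    exact ConnectedComponent.sound h.symm.reachable
  -- an outside vertex exists
  have hcard4 : Fintype.card C.supp = 4 := by
    rw [Fintype.card_congr φ.toEquiv, Fintype.card_fin]
  obtain ⟨u, hu⟩ : ∃ u : V, u ∉ C.supp := by
    by_contra h
    push_neg at h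
    have h5 : Fintype.card V ≤ Fintype.card C.supp :=
      Fintype.card_le_of_injective (fun x => ⟨x, h x⟩)
        (fun a b hab => congrArg Subtype.val hab)
    omega
  -- distance helpers
  have dist1 : ∀ x y : V, G.Adj x y → G.dist x y = 1 := fun x y h =>
    SimpleGraph.dist_eq_one_iff_adj.mpr h
  have dist2 : ∀ x y z : V, ¬ G.Adj x y → x ≠ y → G.Adj x z → G.Adj z y → G.dist x y = 2 := by
    intro x y z hn hne h1 h2
    have hle : G.dist x y ≤ 2 := by
      have := SimpleGraph.dist_le (Walk.cons h1 h2.toWalk)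
      simpa using this
    have h0 : G.dist x y ≠ 0 := (hG.pos_dist_of_ne hne).ne'
    have h1' : G.dist x y ≠ 1 := fun h => hn (SimpleGraph.dist_eq_one_iff_adj.mp h)
    omega
  -- mixed distances
  have hmixd : ∀ x ∈ C.supp, ∀ y, y ∉ C.supp → G.dist x y = 1 := fun x hx y hy =>
    dist1 _ _ (hout x hx y hy)
  have hmixd' : ∀ x ∈ C.supp, ∀ y, y ∉ C.supp → G.dist y x = 1 := by
    intro x hx y hy
    rw [SimpleGraph.dist_comm]
    exact hmixd x hx y hy
  -- distance table inside the component
  have gAP : G.Adj A P := hGadj _ _ neAP nAP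
  have gAD : G.Adj A D := hGadj _ _ neAD nAD
  have gBD : G.Adj B D := hGadj _ _ neBD nBD
  have dAB : G.dist A B = 2 :=
    dist2 A B u (hGnadj _ _ cAB) neAB (hout A hA u hu) ((hout B hB u hu).symm)
  have dBP : G.dist B P = 2 :=
    dist2 B P u (hGnadj _ _ cBP) neBP (hout B hB u hu) ((hout P hP u hu).symm)
  have dPD : G.dist P D = 2 :=
    dist2 P D u (hGnadj _ _ cPD) nePD (hout P hP u hu) ((hout D hD u hu).symm)
  have dAP : G.dist A P = 1 := dist1 _ _ gAP
  have dAD : G.dist A D = 1 := dist1 _ _ gAD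
  have dBD : G.dist B D = 1 := dist1 _ _ gBD
  have dBA : G.dist B A = 2 := by rw [SimpleGraph.dist_comm]; exact dAB
  have dPB : G.dist P B = 2 := by rw [SimpleGraph.dist_comm]; exact dBP
  have dDP : G.dist D P = 2 := by rw [SimpleGraph.dist_comm]; exact dPD
  have dPA : G.dist P A = 1 := by rw [SimpleGraph.dist_comm]; exact dAP
  have dDA : G.dist D A = 1 := by rw [SimpleGraph.dist_comm]; exact dAD
  have dDB : G.dist D B = 1 := by rw [SimpleGraph.dist_comm]; exact dBD
  -- a resolving set of minimum cardinality exists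
  have hsetne : {n | ∃ R : Set V, IsResolving G R ∧ R.ncard = n}.Nonempty := by
    refine ⟨(Set.univ : Set V).ncard, Set.univ, fun x y hxy => ⟨x, trivial, ?_⟩, rfl⟩
    rw [SimpleGraph.dist_self]
    exact (hG.pos_dist_of_ne hxy).ne
  obtain ⟨R, hR, hRcard⟩ := Nat.sInf_mem hsetne
  -- any resolving set contains at least two vertices of the component
  have hRin : ∀ x y : V, x ∈ C.supp → y ∈ C.supp → ∀ r, r ∉ C.supp →
      G.dist r x = G.dist r y := by
    intro x y hx hy r hr
    rw [hmixd' x hx r hr, hmixd' y hy r hr]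
  have htwo : ∃ r1 ∈ R ∩ C.supp, ∃ r2 ∈ R ∩ C.supp, r1 ≠ r2 := by
    obtain ⟨r1, hr1R, hr1⟩ := hR A B neAB
    have hr1C : r1 ∈ C.supp := by
      by_contra h
      exact hr1 (hRin A B hA hB r1 h)
    -- r1 is not D
    rcases hmem r1 hr1C with rfl | rfl | rfl | rfl
    · -- r1 = A fails the pair (P, D)
      obtain ⟨r2, hr2R, hr2⟩ := hR P D nePD
      have hr2C : r2 ∈ C.supp := by
        by_contra h
        exact hr2 (hRin P D hP hD r2 h)
      refine ⟨r1, ⟨hr1R, hr1C⟩, r2, ⟨hr2R, hr2C⟩, fun h => hr2 ?_⟩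
      rw [← h, dAP, dAD]
    · -- r1 = B fails the pair (A, P)
      obtain ⟨r2, hr2R, hr2⟩ := hR A P neAP
      have hr2C : r2 ∈ C.supp := by
        by_contra h
        exact hr2 (hRin A P hA hP r2 h)
      refine ⟨r1, ⟨hr1R, hr1C⟩, r2, ⟨hr2R, hr2C⟩, fun h => hr2 ?_⟩
      rw [← h, dBA, dBP]
    · -- r1 = P fails the pair (B, D)
      obtain ⟨r2, hr2R, hr2⟩ := hR B D neBD
      have hr2C : r2 ∈ C.supp := by
        by_contra h
        exact hr2 (hRin B D hB hD r2 h)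
      refine ⟨r1, ⟨hr1R, hr1C⟩, r2, ⟨hr2R, hr2C⟩, fun h => hr2 ?_⟩
      rw [← h, dPB, dPD]
    · -- r1 = D fails the pair (A, B), contradiction with hr1
      exact absurd (by rw [dDA, dDB]) hr1
  obtain ⟨r1, hr1, r2, hr2, hr12⟩ := htwo
  have hintcard : 2 ≤ (R ∩ C.supp).ncard := by
    have hsub : ({r1, r2} : Set V) ⊆ R ∩ C.supp := by
      intro x hx
      rcases hx with rfl | hx
      · exact hr1
      · rw [Set.mem_singleton_iff] at hx; subst hx; exact hr2
    calc 2 = ({r1, r2} : Set V).ncard := (Set.ncard_pair hr12).symm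
      _ ≤ (R ∩ C.supp).ncard := Set.ncard_le_ncard hsub (Set.toFinite _)
  -- the main replacement argument
  have main : ∀ s1 s2 : V, s1 ∈ C.supp → s2 ∈ C.supp → s1 ≠ s2 → v ≠ s1 → v ≠ s2 →
      (∀ x y : V, x ∈ C.supp → y ∈ C.supp → x ≠ y →
        G.dist s1 x ≠ G.dist s1 y ∨ G.dist s2 x ≠ G.dist s2 y) →
      (∀ x ∈ C.supp, G.dist s1 x ≠ 1 ∨ G.dist s2 x ≠ 1) → False := by
    intro s1 s2 hs1 hs2 hs12 hvs1 hvs2 hres1 hres2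
    set R' : Set V := (R \ C.supp) ∪ {s1, s2} with hR'def
    have hres' : IsResolving G R' := by
      intro x y hxy
      by_cases hx : x ∈ C.supp <;> by_cases hy : y ∈ C.supp
      · rcases hres1 x y hx hy hxy with h | h
        · exact ⟨s1, Or.inr (Or.inl rfl), h⟩
        · exact ⟨s2, Or.inr (Or.inr rfl), h⟩
      · rcases hres2 x hx with h | h
        · exact ⟨s1, Or.inr (Or.inl rfl), by rw [hmixd s1 hs1 y hy]; exact h⟩
        · exact ⟨s2, Or.inr (Or.inr rfl), by rw [hmixd s2 hs2 y hy]; exact h⟩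
      · rcases hres2 y hy with h | h
        · exact ⟨s1, Or.inr (Or.inl rfl), by rw [hmixd s1 hs1 x hx]; exact fun hh => h hh.symm⟩
        · exact ⟨s2, Or.inr (Or.inr rfl), by rw [hmixd s2 hs2 x hx]; exact fun hh => h hh.symm⟩
      · obtain ⟨r, hrR, hr⟩ := hR x y hxy
        have hrC : r ∉ C.supp := by
          intro h
          exact hr (by rw [hmixd r h x hx, hmixd r h y hy])
        exact ⟨r, Or.inl ⟨hrR, hrC⟩, hr⟩
    have hcard' : R'.ncard ≤ R.ncard := by
      have h1 : R'.ncard ≤ (R \ C.supp).ncard + 2 := by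
        have := Set.ncard_union_le (R \ C.supp) ({s1, s2} : Set V)
        rwa [Set.ncard_pair hs12] at this
      have h2 : (R ∩ C.supp).ncard + (R \ C.supp).ncard = R.ncard :=
        Set.ncard_inter_add_ncard_diff_eq_ncard R C.supp (Set.toFinite _)
      omega
    have hdimle : metricDim G ≤ R'.ncard := Nat.sInf_le ⟨R', hres', rfl⟩
    have hdim_eq : metricDim G = R.ncard := hRcard.symm
    have hbasis : IsMetricBasis G R' :=
      ⟨hres', le_antisymm (by rw [hdim_eq]; exact hcard') hdimle⟩
    have hvR' : v ∈ R' := hforced R' hbasis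
    rcases hvR' with ⟨_, hvC⟩ | hv'
    · exact hvC hv
    · rcases hv' with h | h
      · exact hvs1 h
      · exact hvs2 (Set.mem_singleton_iff.mp h)
  -- apply with a suitable pair
  have resBD : ∀ x y : V, x ∈ C.supp → y ∈ C.supp → x ≠ y →
      G.dist B x ≠ G.dist B y ∨ G.dist D x ≠ G.dist D y := by
    intro x y hx hy hxy
    rcases hmem x hx with rfl | rfl | rfl | rfl <;> rcases hmem y hy with rfl | rfl | rfl | rfl <;>
      first
        | exact absurd rfl hxy
        | (refine Or.inl ?_; simp only [dBA, dBP, dBD, SimpleGraph.dist_self]; omega)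
        | (refine Or.inr ?_; simp only [dDA, dDB, dDP, SimpleGraph.dist_self]; omega)
  have resAP : ∀ x y : V, x ∈ C.supp → y ∈ C.supp → x ≠ y →
      G.dist A x ≠ G.dist A y ∨ G.dist P x ≠ G.dist P y := by
    intro x y hx hy hxy
    rcases hmem x hx with rfl | rfl | rfl | rfl <;> rcases hmem y hy with rfl | rfl | rfl | rfl <;>
      first
        | exact absurd rfl hxy
        | (refine Or.inl ?_; simp only [dAB, dAP, dAD, SimpleGraph.dist_self]; omega)
        | (refine Or.inr ?_; simp only [dPA, dPB, dPD, SimpleGraph.dist_self]; omega)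
  have mixBD : ∀ x ∈ C.supp, G.dist B x ≠ 1 ∨ G.dist D x ≠ 1 := by
    intro x hx
    rcases hmem x hx with rfl | rfl | rfl | rfl <;>
      first
        | (refine Or.inl ?_; simp only [dBA, dBP, dBD, SimpleGraph.dist_self]; omega)
        | (refine Or.inr ?_; simp only [dDA, dDB, dDP, SimpleGraph.dist_self]; omega)
  have mixAP : ∀ x ∈ C.supp, G.dist A x ≠ 1 ∨ G.dist P x ≠ 1 := by
    intro x hx
    rcases hmem x hx with rfl | rfl | rfl | rfl <;>
      first
        | (refine Or.inl ?_; simp only [dAB, dAP, dAD, SimpleGraph.dist_self]; omega)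
        | (refine Or.inr ?_; simp only [dPA, dPB, dPD, SimpleGraph.dist_self]; omega)
  rcases hmem v hv with rfl | rfl | rfl | rfl
  · exact main B D hB hD neBD neAB neAD resBD mixBD
  · exact main A P hA hP neAP (Ne.symm neAB) neBP resAP mixAP
  · exact main B D hB hD neBD (Ne.symm neBP) nePD resBD mixBD
  · exact main A P hA hP neAP (Ne.symm neAD) (Ne.symm nePD) resAP mixAP
end

section
/- Let k be an even positive integer and m ≥ 1. Let G be the connected graph whose complement is the disjoint union of k/2 copies of the path P_5 and m isolated vertices. Then dim(G) = k + m - 1 and G has exactly k basis forced vertices, namely in each copy of P_5 with vertices v_1v_2v_3v_4v_5 (in path order in the complement), the vertices v_2 and v_4. -/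
open SimpleGraph

namespace Stmt15Aux

/-- path adjacency on `Fin 5` -/
abbrev P5 (x y : Fin 5) : Prop := x.val + 1 = y.val ∨ y.val + 1 = x.val

abbrev innerF (S : Finset (Fin 5)) : Prop :=
  ∀ x y : Fin 5, x ≠ y → ∃ s ∈ S, s = x ∨ s = y ∨ ¬(P5 s x ↔ P5 s y)

abbrev domF (S : Finset (Fin 5)) : Prop :=
  ∀ x : Fin 5, ∃ s ∈ S, s = x ∨ P5 s x

lemma dec_inner13 : innerF {1, 3} := by decide
lemma dec_dom13 : domF {1, 3} := by decide
lemma dec_two : ∀ S : Finset (Fin 5), innerF S → 2 ≤ S.card := by decide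
lemma dec_dom13' : ∀ a : Fin 5, ∃ s : Fin 5, (s = 1 ∨ s = 3) ∧ (s = a ∨ P5 s a) := by
  decide

lemma dec_inner13' : ∀ a b : Fin 5, a ≠ b →
    ∃ s : Fin 5, (s = 1 ∨ s = 3) ∧ (s = a ∨ s = b ∨ ¬(P5 s a ↔ P5 s b)) := by
  decide

lemma dec_uniq : ∀ S : Finset (Fin 5), innerF S → domF S → S.card = 2 → S = {1, 3} := by
  decide

end Stmt15Aux

open Stmt15Aux Finset in
theorem stmt15 (c m : ℕ) (hc : 1 ≤ c) (hm : 1 ≤ m)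
    (G : SimpleGraph ((Fin c × Fin 5) ⊕ Fin m))
    (hcompl : ∀ a b : (Fin c × Fin 5) ⊕ Fin m,
      Gᶜ.Adj a b ↔ ∃ (i : Fin c) (x y : Fin 5),
        a = Sum.inl (i, x) ∧ b = Sum.inl (i, y) ∧ (pathGraph 5).Adj x y) :
    metricDim G = 2 * c + m - 1 ∧
    {v | IsBasisForced G v} =
      {w : (Fin c × Fin 5) ⊕ Fin m | ∃ i : Fin c,
        w = Sum.inl (i, 1) ∨ w = Sum.inl (i, 3)} := by
  classical
  have j0 : Fin m := ⟨0, hm⟩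
  -- complement adjacency characterizations
  have cA_inl : ∀ (i j : Fin c) (x y : Fin 5),
      Gᶜ.Adj (Sum.inl (i, x)) (Sum.inl (j, y)) ↔ i = j ∧ P5 x y := by
    intro i j x y
    rw [hcompl]
    constructor
    · rintro ⟨i', x', y', h1, h2, h3⟩
      rw [pathGraph_adj] at h3
      obtain ⟨h1a, h1b⟩ : i = i' ∧ x = x' := by
        simpa [Prod.ext_iff] using h1
      obtain ⟨h2a, h2b⟩ : j = i' ∧ y = y' := by
        simpa [Prod.ext_iff] using h2
      subst h1a h1b h2b
      exact ⟨h2a.symm, h3⟩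
    · rintro ⟨rfl, h⟩
      exact ⟨i, x, y, rfl, rfl, by rwa [pathGraph_adj]⟩
  have cA_inr_left : ∀ (j : Fin m) (b : (Fin c × Fin 5) ⊕ Fin m), ¬ Gᶜ.Adj (Sum.inr j) b := by
    intro j b h
    rw [hcompl] at h
    obtain ⟨_, _, _, h1, _, _⟩ := h
    simp at h1
  have cA_inr_right : ∀ (a : (Fin c × Fin 5) ⊕ Fin m) (j : Fin m), ¬ Gᶜ.Adj a (Sum.inr j) := by
    intro a j h
    rw [hcompl] at h
    obtain ⟨_, _, _, _, h2, _⟩ := h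
    simp at h2
  have adj_iff : ∀ a b : (Fin c × Fin 5) ⊕ Fin m, G.Adj a b ↔ a ≠ b ∧ ¬ Gᶜ.Adj a b := by
    intro a b
    conv_lhs => rw [← compl_compl G]
    rw [compl_adj]
  -- distance formula
  have dist_eq : ∀ a b : (Fin c × Fin 5) ⊕ Fin m, a ≠ b →
      G.dist a b = if Gᶜ.Adj a b then 2 else 1 := by
    intro a b hne
    by_cases h : Gᶜ.Adj a b
    · rw [if_pos h]
      obtain ⟨i, x, y, rfl, rfl, -⟩ := (hcompl a b).mp h
      have h1 : G.Adj (Sum.inl (i, x)) (Sum.inr j0) :=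
        (adj_iff _ _).mpr ⟨by simp, cA_inr_right _ _⟩
      have h2 : G.Adj (Sum.inr j0) (Sum.inl (i, y)) :=
        (adj_iff _ _).mpr ⟨by simp, cA_inr_left _ _⟩
      have hle : G.dist (Sum.inl (i, x)) (Sum.inl (i, y)) ≤ 2 := by
        simpa using SimpleGraph.dist_le (Walk.cons h1 (Walk.cons h2 Walk.nil))
      have hne1 : G.dist (Sum.inl (i, x)) (Sum.inl (i, y)) ≠ 1 := by
        intro h1'
        have := SimpleGraph.dist_eq_one_iff_adj.mp h1'
        exact ((compl_adj G _ _).mp h).2 this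
      have hne0 : G.dist (Sum.inl (i, x)) (Sum.inl (i, y)) ≠ 0 := by
        intro h0
        rcases SimpleGraph.dist_eq_zero_iff_eq_or_not_reachable.mp h0 with h' | h'
        · exact hne h'
        · exact h' ⟨Walk.cons h1 (Walk.cons h2 Walk.nil)⟩
      omega
    · rw [if_neg h]
      exact SimpleGraph.dist_eq_one_iff_adj.mpr ((adj_iff _ _).mpr ⟨hne, h⟩)
  -- resolving characterization pointwise
  have res_iff : ∀ (r x y : (Fin c × Fin 5) ⊕ Fin m), x ≠ y →
      (G.dist r x ≠ G.dist r y ↔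
        (r = x ∨ r = y ∨ ¬(Gᶜ.Adj r x ↔ Gᶜ.Adj r y))) := by
    intro r x y hxy
    by_cases hrx : r = x
    · subst hrx
      have : G.dist r y = if Gᶜ.Adj r y then 2 else 1 := dist_eq _ _ hxy
      rw [SimpleGraph.dist_self, this]
      constructor
      · intro _; exact Or.inl rfl
      · intro _; split_ifs <;> omega
    · by_cases hry : r = y
      · subst hry
        have : G.dist r x = if Gᶜ.Adj r x then 2 else 1 :=
          dist_eq _ _ (fun h => hxy h.symm) -- r ≠ x means x ≠ r? careful
        rw [SimpleGraph.dist_self, this]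
        constructor
        · intro _; exact Or.inr (Or.inl rfl)
        · intro _; split_ifs <;> omega
      · rw [dist_eq r x hrx, dist_eq r y hry]
        by_cases h1 : Gᶜ.Adj r x <;> by_cases h2 : Gᶜ.Adj r y <;>
          simp [h1, h2, hrx, hry]
  have res_iff' : ∀ (R : Set ((Fin c × Fin 5) ⊕ Fin m)), IsResolving G R ↔
      ∀ x y, x ≠ y → ∃ r ∈ R, r = x ∨ r = y ∨ ¬(Gᶜ.Adj r x ↔ Gᶜ.Adj r y) := by
    intro R
    constructor
    · intro h x y hxy
      obtain ⟨r, hr, hd⟩ := h x y hxy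
      exact ⟨r, hr, (res_iff r x y hxy).mp hd⟩
    · intro h x y hxy
      obtain ⟨r, hr, hd⟩ := h x y hxy
      exact ⟨r, hr, (res_iff r x y hxy).mpr hd⟩
  -- counting lemma
  have count : ∀ F : Finset ((Fin c × Fin 5) ⊕ Fin m),
      F.card = (∑ i : Fin c,
          (univ.filter (fun s : Fin 5 => Sum.inl (i, s) ∈ F)).card)
        + (univ.filter (fun j : Fin m => Sum.inr j ∈ F)).card := by
    intro F
    have hkey := Finset.card_eq_sum_card_fiberwise
      (f := Sum.elim (fun p : Fin c × Fin 5 => some p.1)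
        (fun _ : Fin m => (none : Option (Fin c))))
      (s := F) (t := univ) (fun x _ => mem_univ _)
    rw [hkey, Fintype.sum_option]
    have hnone : F.filter (fun v => Sum.elim (fun p : Fin c × Fin 5 => some p.1)
          (fun _ : Fin m => (none : Option (Fin c))) v = none)
        = (univ.filter (fun j : Fin m => Sum.inr j ∈ F)).image Sum.inr := by
      ext v
      rcases v with ⟨i, x⟩ | j <;> simp
    have hsome : ∀ i : Fin c, F.filter (fun v => Sum.elim (fun p : Fin c × Fin 5 => some p.1)
          (fun _ : Fin m => (none : Option (Fin c))) v = some i)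
        = (univ.filter (fun s : Fin 5 => Sum.inl (i, s) ∈ F)).image
            (fun s => Sum.inl (i, s)) := by
      intro i
      ext v
      rcases v with ⟨i', x⟩ | j <;> simp
      constructor
      · rintro ⟨h1, rfl⟩; exact ⟨h1, rfl⟩
      · rintro ⟨h1, rfl⟩; exact ⟨h1, rfl⟩
    rw [hnone]
    rw [Finset.card_image_of_injective _ Sum.inr_injective]
    have : ∀ i : Fin c, (F.filter (fun v => Sum.elim (fun p : Fin c × Fin 5 => some p.1)
          (fun _ : Fin m => (none : Option (Fin c))) v = some i)).card
        = (univ.filter (fun s : Fin 5 => Sum.inl (i, s) ∈ F)).card := by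
      intro i
      rw [hsome i, Finset.card_image_of_injective]
      intro a b hab
      simpa using hab
    simp only [this]
    omega
  -- resolving implies inner condition on each copy
  have inner_of_res : ∀ R : Set ((Fin c × Fin 5) ⊕ Fin m), IsResolving G R →
      ∀ i : Fin c, innerF (univ.filter fun s : Fin 5 => Sum.inl (i, s) ∈ R) := by
    intro R hR i x y hxy
    obtain ⟨r, hrR, hres⟩ := (res_iff' R).mp hR (Sum.inl (i, x)) (Sum.inl (i, y))
      (by simp [hxy])
    rcases r with ⟨j, s⟩ | j
    · rcases hres with h | h | h
      · obtain ⟨rfl, rfl⟩ : j = i ∧ s = x := by simpa [Prod.ext_iff] using h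
        exact ⟨s, by simpa using hrR, Or.inl rfl⟩
      · obtain ⟨rfl, rfl⟩ : j = i ∧ s = y := by simpa [Prod.ext_iff] using h
        exact ⟨s, by simpa using hrR, Or.inr (Or.inl rfl)⟩
      · rw [cA_inl, cA_inl] at h
        by_cases hji : j = i
        · subst hji
          refine ⟨s, by simpa using hrR, Or.inr (Or.inr ?_)⟩
          intro hiff
          exact h (by constructor <;> rintro ⟨-, h'⟩
                      exacts [⟨rfl, hiff.mp h'⟩, ⟨rfl, hiff.mpr h'⟩])
        · exact absurd (by constructor <;> rintro ⟨h', -⟩ <;> exact absurd h' hji) h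
    · rcases hres with h | h | h
      · exact absurd h (by simp)
      · exact absurd h (by simp)
      · exact absurd ⟨fun h' => absurd h' (cA_inr_left _ _),
          fun h' => absurd h' (cA_inr_left _ _)⟩ h
  -- at least m-1 of the inr vertices
  have T_bound : ∀ R : Set ((Fin c × Fin 5) ⊕ Fin m), IsResolving G R →
      m - 1 ≤ (univ.filter fun j : Fin m => Sum.inr j ∈ R).card := by
    intro R hR
    have hone : (univ.filter fun j : Fin m => Sum.inr j ∉ R).card ≤ 1 := by
      rw [Finset.card_le_one]
      intro a ha b hb
      by_contra hab
      obtain ⟨r, hrR, hres⟩ := (res_iff' R).mp hR (Sum.inr a) (Sum.inr b)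
        (by simp [hab])
      simp only [mem_filter] at ha hb
      rcases hres with h | h | h
      · subst h; exact ha.2 hrR
      · subst h; exact hb.2 hrR
      · exact h ⟨fun h' => absurd h' (cA_inr_right _ _),
          fun h' => absurd h' (cA_inr_right _ _)⟩
    have := Finset.card_filter_add_card_filter_not
      (s := (univ : Finset (Fin m))) (p := fun j => Sum.inr j ∈ R)
    simp only [Finset.card_univ, Fintype.card_fin] at this
    omega
  -- domination when an inr vertex is missing
  have dom_of_missing : ∀ R : Set ((Fin c × Fin 5) ⊕ Fin m), IsResolving G R →
      ∀ j : Fin m, Sum.inr j ∉ R →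
      ∀ i : Fin c, domF (univ.filter fun s : Fin 5 => Sum.inl (i, s) ∈ R) := by
    intro R hR j hj i a
    obtain ⟨r, hrR, hres⟩ := (res_iff' R).mp hR (Sum.inl (i, a)) (Sum.inr j)
      (by simp)
    rcases hres with h | h | h
    · subst h
      exact ⟨a, by simpa using hrR, Or.inl rfl⟩
    · exact absurd (h ▸ hrR) hj
    · have hcr : Gᶜ.Adj r (Sum.inl (i, a)) := by
        by_contra hc
        exact h ⟨fun h' => absurd h' hc, fun h' => absurd h' (cA_inr_right _ _)⟩
      rcases r with ⟨j', s⟩ | j''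
      · rw [cA_inl] at hcr
        obtain ⟨rfl, hP⟩ := hcr
        exact ⟨s, by simpa using hrR, Or.inr hP⟩
      · exact absurd hcr (cA_inr_left _ _)
  -- lower bound for any resolving set
  have lower : ∀ n, (∃ R : Set ((Fin c × Fin 5) ⊕ Fin m),
      IsResolving G R ∧ R.ncard = n) → 2 * c + m - 1 ≤ n := by
    intro n ⟨R, hR, hcard⟩
    have hfin : R.Finite := Set.toFinite R
    have hcard' : hfin.toFinset.card = n := by
      rw [← Set.ncard_eq_toFinset_card R hfin, hcard]
    have hcount := count hfin.toFinset
    have hSi : ∀ i : Fin c,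
        (univ.filter fun s : Fin 5 => Sum.inl (i, s) ∈ hfin.toFinset)
          = (univ.filter fun s : Fin 5 => Sum.inl (i, s) ∈ R) :=
      fun i => Finset.filter_congr (fun s _ => by rw [Set.Finite.mem_toFinset])
    have hT : (univ.filter fun j : Fin m => Sum.inr j ∈ hfin.toFinset)
          = (univ.filter fun j : Fin m => Sum.inr j ∈ R) :=
      Finset.filter_congr (fun s _ => by rw [Set.Finite.mem_toFinset])
    rw [hT] at hcount
    simp only [hSi] at hcount
    have h2 : ∀ i : Fin c,
        2 ≤ (univ.filter fun s : Fin 5 => Sum.inl (i, s) ∈ R).card :=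
      fun i => dec_two _ (inner_of_res R hR i)
    have hsum : 2 * c ≤ ∑ i : Fin c,
        (univ.filter fun s : Fin 5 => Sum.inl (i, s) ∈ R).card := by
      calc 2 * c = ∑ _i : Fin c, 2 := by simp [Finset.sum_const, mul_comm]
        _ ≤ _ := Finset.sum_le_sum (fun i _ => h2 i)
    have hT' := T_bound R hR
    omega
  -- the family of candidate bases
  have basis_family : ∀ t : Fin m, ∃ R : Set ((Fin c × Fin 5) ⊕ Fin m),
      IsResolving G R ∧ R.ncard = 2 * c + m - 1 ∧
      ∀ v, v ∈ R ↔ ((∃ i : Fin c, v = Sum.inl (i, 1) ∨ v = Sum.inl (i, 3)) ∨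
        ∃ j : Fin m, j ≠ t ∧ v = Sum.inr j) := by
    intro t
    set A1 : Finset ((Fin c × Fin 5) ⊕ Fin m) :=
      univ.image (fun i : Fin c => Sum.inl (i, (1 : Fin 5))) with hA1
    set A3 : Finset ((Fin c × Fin 5) ⊕ Fin m) :=
      univ.image (fun i : Fin c => Sum.inl (i, (3 : Fin 5))) with hA3
    set B : Finset ((Fin c × Fin 5) ⊕ Fin m) :=
      (univ.erase t).image Sum.inr with hB
    have hmem : ∀ v, v ∈ A1 ∪ A3 ∪ B ↔
        ((∃ i : Fin c, v = Sum.inl (i, 1) ∨ v = Sum.inl (i, 3)) ∨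
          ∃ j : Fin m, j ≠ t ∧ v = Sum.inr j) := by
      intro v
      simp only [hA1, hA3, hB, Finset.mem_union, Finset.mem_image,
        Finset.mem_univ, true_and, Finset.mem_erase]
      constructor
      · rintro ((⟨i, rfl⟩ | ⟨i, rfl⟩) | ⟨j, ⟨hj, -⟩, rfl⟩)
        · exact Or.inl ⟨i, Or.inl rfl⟩
        · exact Or.inl ⟨i, Or.inr rfl⟩
        · exact Or.inr ⟨j, hj, rfl⟩
      · rintro (⟨i, rfl | rfl⟩ | ⟨j, hj, rfl⟩)
        · exact Or.inl (Or.inl ⟨i, rfl⟩)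
        · exact Or.inl (Or.inr ⟨i, rfl⟩)
        · exact Or.inr ⟨j, ⟨hj, trivial⟩, rfl⟩
    have hcard : (A1 ∪ A3 ∪ B).card = 2 * c + m - 1 := by
      have hinj1 : Function.Injective (fun i : Fin c => (Sum.inl (i, (1 : Fin 5)) :
          (Fin c × Fin 5) ⊕ Fin m)) := by
        intro a b hab; simpa [Prod.ext_iff] using hab
      have hinj3 : Function.Injective (fun i : Fin c => (Sum.inl (i, (3 : Fin 5)) :
          (Fin c × Fin 5) ⊕ Fin m)) := by
        intro a b hab; simpa [Prod.ext_iff] using hab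
      have hd1 : Disjoint A1 A3 := by
        rw [Finset.disjoint_left]
        rintro a ha hb
        simp only [hA1, hA3, Finset.mem_image, Finset.mem_univ, true_and] at ha hb
        obtain ⟨i, rfl⟩ := ha
        obtain ⟨i', hi'⟩ := hb
        simp [Prod.ext_iff] at hi'
      have hd2 : Disjoint (A1 ∪ A3) B := by
        rw [Finset.disjoint_left]
        rintro a ha hb
        simp only [hB, Finset.mem_image] at hb
        obtain ⟨j, -, rfl⟩ := hb
        rcases Finset.mem_union.mp ha with h | h <;>
          · simp only [hA1, hA3, Finset.mem_image] at h
            obtain ⟨i, -, hi⟩ := h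
            exact absurd hi (by simp)
      rw [Finset.card_union_of_disjoint hd2, Finset.card_union_of_disjoint hd1]
      rw [hA1, hA3, hB, Finset.card_image_of_injective _ hinj1,
        Finset.card_image_of_injective _ hinj3,
        Finset.card_image_of_injective _ Sum.inr_injective,
        Finset.card_erase_of_mem (Finset.mem_univ _)]
      simp only [Finset.card_univ, Fintype.card_fin]
      omega
    refine ⟨↑(A1 ∪ A3 ∪ B), ?_, by rw [Set.ncard_coe_finset, hcard], fun v => by
      rw [Finset.mem_coe, hmem]⟩
    rw [res_iff']
    rintro x y hxy
    have memiff : ∀ v : (Fin c × Fin 5) ⊕ Fin m, v ∈ (↑(A1 ∪ A3 ∪ B) : Set ((Fin c × Fin 5) ⊕ Fin m)) ↔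
        ((∃ i : Fin c, v = Sum.inl (i, 1) ∨ v = Sum.inl (i, 3)) ∨
          ∃ j : Fin m, j ≠ t ∧ v = Sum.inr j) := fun v => by
      rw [Finset.mem_coe, hmem]
    rcases x with ⟨i, a⟩ | j
    · rcases y with ⟨i', b⟩ | j
      · by_cases hii : i = i'
        · subst hii
          have hab : a ≠ b := fun h => hxy (by rw [h])
          obtain ⟨s, hs13, hcase⟩ := dec_inner13' a b hab
          refine ⟨Sum.inl (i, s), (memiff _).mpr (Or.inl ⟨i, by
            rcases hs13 with rfl | rfl
            · exact Or.inl rfl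
            · exact Or.inr rfl⟩), ?_⟩
          rcases hcase with rfl | rfl | h
          · exact Or.inl rfl
          · exact Or.inr (Or.inl rfl)
          · exact Or.inr (Or.inr (by simpa [cA_inl] using h))
        · obtain ⟨s, hs13, hcase⟩ := dec_dom13' a
          refine ⟨Sum.inl (i, s), (memiff _).mpr (Or.inl ⟨i, by
            rcases hs13 with rfl | rfl
            · exact Or.inl rfl
            · exact Or.inr rfl⟩), ?_⟩
          rcases hcase with rfl | h
          · exact Or.inl rfl
          · exact Or.inr (Or.inr (by simp [cA_inl, hii, h]))
      · obtain ⟨s, hs13, hcase⟩ := dec_dom13' a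
        refine ⟨Sum.inl (i, s), (memiff _).mpr (Or.inl ⟨i, by
          rcases hs13 with rfl | rfl
          · exact Or.inl rfl
          · exact Or.inr rfl⟩), ?_⟩
        rcases hcase with rfl | h
        · exact Or.inl rfl
        · refine Or.inr (Or.inr ?_)
          intro hiff
          exact absurd (hiff.mp ((cA_inl i i s a).mpr ⟨rfl, h⟩)) (cA_inr_right _ _)
    · rcases y with ⟨i, a⟩ | j'
      · obtain ⟨s, hs13, hcase⟩ := dec_dom13' a
        refine ⟨Sum.inl (i, s), (memiff _).mpr (Or.inl ⟨i, by
          rcases hs13 with rfl | rfl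
          · exact Or.inl rfl
          · exact Or.inr rfl⟩), ?_⟩
        rcases hcase with rfl | h
        · exact Or.inr (Or.inl rfl)
        · refine Or.inr (Or.inr ?_)
          intro hiff
          exact absurd (hiff.mpr ((cA_inl i i s a).mpr ⟨rfl, h⟩)) (cA_inr_right _ _)
      · have hjj : j ≠ j' := fun h => hxy (by rw [h])
        by_cases hjt : j = t
        · refine ⟨Sum.inr j', (memiff _).mpr (Or.inr ⟨j', ?_, rfl⟩),
            Or.inr (Or.inl rfl)⟩
          intro h; exact hjj (by rw [hjt, h])
        · exact ⟨Sum.inr j, (memiff _).mpr (Or.inr ⟨j, hjt, rfl⟩), Or.inl rfl⟩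
  have hdim : metricDim G = 2 * c + m - 1 := by
    obtain ⟨R, hRres, hRcard, -⟩ := basis_family j0
    exact le_antisymm (Nat.sInf_le ⟨R, hRres, hRcard⟩)
      (le_csInf ⟨2 * c + m - 1, R, hRres, hRcard⟩ lower)
  -- every metric basis contains the forced vertices
  have forced : ∀ R : Set ((Fin c × Fin 5) ⊕ Fin m), IsMetricBasis G R →
      ∀ i : Fin c, Sum.inl (i, (1 : Fin 5)) ∈ R ∧ Sum.inl (i, (3 : Fin 5)) ∈ R := by
    intro R ⟨hres, hcard⟩ i
    rw [hdim] at hcard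
    have hfin : R.Finite := Set.toFinite R
    have hcard' : hfin.toFinset.card = 2 * c + m - 1 := by
      rw [← Set.ncard_eq_toFinset_card R hfin, hcard]
    have hcount := count hfin.toFinset
    have hSi : ∀ i' : Fin c,
        (univ.filter fun s : Fin 5 => Sum.inl (i', s) ∈ hfin.toFinset)
          = (univ.filter fun s : Fin 5 => Sum.inl (i', s) ∈ R) :=
      fun i' => Finset.filter_congr (fun s _ => by rw [Set.Finite.mem_toFinset])
    have hT : (univ.filter fun j : Fin m => Sum.inr j ∈ hfin.toFinset)
          = (univ.filter fun j : Fin m => Sum.inr j ∈ R) :=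
      Finset.filter_congr (fun s _ => by rw [Set.Finite.mem_toFinset])
    rw [hT] at hcount
    simp only [hSi] at hcount
    have h2 : ∀ i' : Fin c,
        2 ≤ (univ.filter fun s : Fin 5 => Sum.inl (i', s) ∈ R).card :=
      fun i' => dec_two _ (inner_of_res R hres i')
    have hTb := T_bound R hres
    have hsum1 : 2 * c ≤ ∑ i' : Fin c,
        (univ.filter fun s : Fin 5 => Sum.inl (i', s) ∈ R).card := by
      calc 2 * c = ∑ _i : Fin c, 2 := by simp [Finset.sum_const, mul_comm]
        _ ≤ _ := Finset.sum_le_sum (fun i' _ => h2 i')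
    have hsumeq : (∑ _i : Fin c, 2) = ∑ i' : Fin c,
        (univ.filter fun s : Fin 5 => Sum.inl (i', s) ∈ R).card := by
      have : (∑ _i : Fin c, 2) = 2 * c := by simp [Finset.sum_const, mul_comm]
      omega
    have hSi2 : ∀ i' : Fin c,
        (univ.filter fun s : Fin 5 => Sum.inl (i', s) ∈ R).card = 2 :=
      fun i' => ((Finset.sum_eq_sum_iff_of_le (fun i' _ => h2 i')).mp hsumeq i'
        (Finset.mem_univ i')).symm
    -- a missing inr vertex
    have hTcard : (univ.filter fun j : Fin m => Sum.inr j ∈ R).card = m - 1 := by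
      have : (∑ _i : Fin c, 2) = 2 * c := by simp [Finset.sum_const, mul_comm]
      omega
    obtain ⟨j, hj⟩ : ∃ j : Fin m, Sum.inr j ∉ R := by
      by_contra h
      push_neg at h
      have : (univ.filter fun j : Fin m => Sum.inr j ∈ R) = univ :=
        Finset.eq_univ_iff_forall.mpr (fun j => by simp [h j])
      rw [this] at hTcard
      simp only [Finset.card_univ, Fintype.card_fin] at hTcard
      omega
    have huniq := dec_uniq _ (inner_of_res R hres i)
      (dom_of_missing R hres j hj i) (hSi2 i)
    constructor
    · have : (1 : Fin 5) ∈ (univ.filter fun s : Fin 5 => Sum.inl (i, s) ∈ R) := by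
        rw [huniq]; decide
      simpa using this
    · have : (3 : Fin 5) ∈ (univ.filter fun s : Fin 5 => Sum.inl (i, s) ∈ R) := by
        rw [huniq]; decide
      simpa using this
  refine ⟨hdim, ?_⟩
  ext v
  simp only [Set.mem_setOf_eq]
  constructor
  · intro hv
    rcases v with ⟨i, a⟩ | j
    · obtain ⟨R, hres, hcard, hmem⟩ := basis_family j0
      have hvR := hv R ⟨hres, by rw [hdim]; exact hcard⟩
      rw [hmem] at hvR
      rcases hvR with ⟨i', h⟩ | ⟨j, -, h⟩
      · exact ⟨i', h⟩
      · simp at h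
    · obtain ⟨R, hres, hcard, hmem⟩ := basis_family j
      have hvR := hv R ⟨hres, by rw [hdim]; exact hcard⟩
      rw [hmem] at hvR
      rcases hvR with ⟨i', h | h⟩ | ⟨j', hj', h⟩
      · simp at h
      · simp at h
      · obtain rfl : j = j' := by simpa using h
        exact absurd rfl hj'
  · rintro ⟨i, rfl | rfl⟩ <;> intro R hR
    · exact (forced R hR i).1
    · exact (forced R hR i).2
end

section
/- If b is a basis forced vertex of a connected graph G and R is a metric basis of G, then there exist two distinct unordered pairs of vertices in U_R(b); moreover, at least one pair {x,y} ∈ U_R(b) satisfies x ∉ R and y ∉ R. -/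
open SimpleGraph

def UR {V : Type*} (G : SimpleGraph V) (R : Set V) (r : V) : Set (Sym2 V) :=
  {p | ∃ x y : V, p = s(x, y) ∧ G.dist r x ≠ G.dist r y ∧
    ∀ t ∈ R, t ≠ r → G.dist t x = G.dist t y}

lemma metricDim_le {V : Type*} (G : SimpleGraph V) {S : Set V} (hS : IsResolving G S) :
    metricDim G ≤ S.ncard :=
  Nat.sInf_le ⟨S, hS, rfl⟩

lemma mem_UR_iff {V : Type*} (G : SimpleGraph V) (R : Set V) (r x y : V) :
    s(x, y) ∈ UR G R r ↔ G.dist r x ≠ G.dist r y ∧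
      ∀ t ∈ R, t ≠ r → G.dist t x = G.dist t y := by
  constructor
  · rintro ⟨x', y', hp, h1, h2⟩
    rw [Sym2.eq_iff] at hp
    rcases hp with ⟨rfl, rfl⟩ | ⟨rfl, rfl⟩
    · exact ⟨h1, h2⟩
    · exact ⟨h1.symm, fun t ht htr => (h2 t ht htr).symm⟩
  · rintro ⟨h1, h2⟩
    exact ⟨x, y, rfl, h1, h2⟩

theorem stmt18 {V : Type*} [Fintype V] (G : SimpleGraph V) (hG : G.Connected)
    (b : V) (hb : IsBasisForced G b)
    (R : Set V) (hR : IsMetricBasis G R) :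
    (∃ p q : Sym2 V, p ∈ UR G R b ∧ q ∈ UR G R b ∧ p ≠ q) ∧
    (∃ x y : V, s(x, y) ∈ UR G R b ∧ x ∉ R ∧ y ∉ R) := by
  have hbR : b ∈ R := hb R hR
  have hRfin : R.Finite := Set.toFinite R
  obtain ⟨hres, hcard⟩ := hR
  -- R \ {b} is not resolving
  have hdiffcard : (R \ {b}).ncard < R.ncard := by
    have : (R \ {b}).ncard = R.ncard - 1 := by
      rw [Set.ncard_diff (Set.singleton_subset_iff.mpr hbR)]
      simp
    rw [this]
    have hpos : 0 < R.ncard := Set.ncard_pos (hRfin) |>.mpr ⟨b, hbR⟩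
    omega
  have hnotres : ¬ IsResolving G (R \ {b}) := by
    intro h
    have := metricDim_le G h
    omega
  -- extract a pair resolved only by b
  have key : ∀ u v : V, u ≠ v → (∀ t ∈ R, t ≠ b → G.dist t u = G.dist t v) →
      s(u, v) ∈ UR G R b := by
    intro u v huv hall
    obtain ⟨r, hrR, hrd⟩ := hres u v huv
    have hrb : r = b := by
      by_contra hne
      exact hrd (hall r hrR hne)
    rw [hrb] at hrd
    exact (mem_UR_iff G R b u v).mpr ⟨hrd, hall⟩
  simp only [IsResolving, not_forall] at hnotres
  obtain ⟨x, y, hxy, hno⟩ := hnotres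
  push_neg at hno
  have hallxy : ∀ t ∈ R, t ≠ b → G.dist t x = G.dist t y := by
    intro t ht htb
    exact hno t ⟨ht, htb⟩
  have hxyUR : s(x, y) ∈ UR G R b := key x y hxy hallxy
  -- endpoint-in-R lemma: any endpoint of a UR pair that lies in R must be b
  have endpt : ∀ u v : V, s(u, v) ∈ UR G R b → u ∈ R → u = b := by
    intro u v hm huR
    rw [mem_UR_iff] at hm
    obtain ⟨hd, hall⟩ := hm
    by_contra hub
    have h0 : G.dist u u = G.dist u v := hall u huR hub
    rw [SimpleGraph.dist_self] at h0
    have : u = v := (hG.dist_eq_zero_iff).mp h0.symm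
    subst this
    exact hd rfl
  -- a helper: if the only UR pair were s(u,v) with u ≠ b, contradiction
  have unique_contra : ∀ u v : V, u ≠ v → u ≠ b → s(u, v) ∈ UR G R b →
      (∀ p ∈ UR G R b, p = s(u, v)) → False := by
    intro u v huv hub hm huniq
    set R' : Set V := insert u (R \ {b}) with hR'
    have hR'res : IsResolving G R' := by
      intro w z hwz
      by_cases h : ∃ t ∈ R \ {b}, G.dist t w ≠ G.dist t z
      · obtain ⟨t, ht, htd⟩ := h
        exact ⟨t, Set.mem_insert_of_mem _ ht, htd⟩
      · push_neg at h
        have hwzUR : s(w, z) ∈ UR G R b := key w z hwz (fun t ht htb => h t ⟨ht, htb⟩)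
        have := huniq _ hwzUR
        rw [Sym2.eq_iff] at this
        refine ⟨u, Set.mem_insert _ _, ?_⟩
        rcases this with ⟨rfl, rfl⟩ | ⟨rfl, rfl⟩
        · rw [SimpleGraph.dist_self]
          exact fun h0 => hwz ((hG.dist_eq_zero_iff).mp h0.symm)
        · rw [SimpleGraph.dist_self]
          exact fun h0 => hwz ((hG.dist_eq_zero_iff).mp h0).symm
    have hcard' : R'.ncard ≤ metricDim G := by
      calc R'.ncard ≤ (R \ {b}).ncard + 1 :=
            Set.ncard_insert_le _ _
        _ ≤ R.ncard := by
            have : (R \ {b}).ncard = R.ncard - 1 := by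
              rw [Set.ncard_diff (Set.singleton_subset_iff.mpr hbR)]; simp
            have hpos : 0 < R.ncard := Set.ncard_pos hRfin |>.mpr ⟨b, hbR⟩
            omega
        _ = metricDim G := hcard
    have hbasis : IsMetricBasis G R' :=
      ⟨hR'res, le_antisymm hcard' (metricDim_le G hR'res)⟩
    have : b ∈ R' := hb R' hbasis
    rcases this with h | h
    · exact hub h.symm
    · exact h.2 rfl
  -- part 1: two distinct pairs
  have part1 : ∃ p q : Sym2 V, p ∈ UR G R b ∧ q ∈ UR G R b ∧ p ≠ q := by
    by_contra hcon
    push_neg at hcon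
    have huniq : ∀ p ∈ UR G R b, p = s(x, y) := fun p hp => hcon p (s(x, y)) hp hxyUR
    by_cases hxb : x = b
    · have hyb : y ≠ b := fun h => hxy (hxb.trans h.symm)
      exact unique_contra y x hxy.symm hyb (by rw [Sym2.eq_swap]; exact hxyUR)
        (fun p hp => (huniq p hp).trans Sym2.eq_swap.symm)
    · exact unique_contra x y hxy hxb hxyUR huniq
  refine ⟨part1, ?_⟩
  -- part 2
  obtain ⟨p, q, hp, hq, hpq⟩ := part1
  obtain ⟨x1, y1, rfl, hd1, hall1⟩ := hp
  obtain ⟨x2, y2, rfl, hd2, hall2⟩ := hq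
  have hne1 : x1 ≠ y1 := fun h => hd1 (h ▸ rfl)
  have hne2 : x2 ≠ y2 := fun h => hd2 (h ▸ rfl)
  -- if a pair has both endpoints outside R, done; else it is {b, other}
  by_cases c1 : x1 ∉ R ∧ y1 ∉ R
  · exact ⟨x1, y1, ⟨x1, y1, rfl, hd1, hall1⟩, c1.1, c1.2⟩
  by_cases c2 : x2 ∉ R ∧ y2 ∉ R
  · exact ⟨x2, y2, ⟨x2, y2, rfl, hd2, hall2⟩, c2.1, c2.2⟩
  -- normalize pair i to (b, zi) with zi ∉ R
  have norm : ∀ x y : V, s(x, y) ∈ UR G R b → ¬(x ∉ R ∧ y ∉ R) →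
      ∃ z : V, s(x, y) = s(b, z) ∧ z ∉ R ∧ z ≠ b := by
    intro u v hm hc
    have hmu := hm
    rw [mem_UR_iff] at hmu
    obtain ⟨hd, hall⟩ := hmu
    have huv : u ≠ v := fun h => hd (h ▸ rfl)
    push_neg at hc
    by_cases huR : u ∈ R
    · have hub := endpt u v hm huR
      have hvb : v ≠ b := fun h => huv (hub.trans h.symm)
      have hvR : v ∉ R :=
        fun hvR' => hvb (endpt v u (by rw [Sym2.eq_swap]; exact hm) hvR')
      exact ⟨v, by rw [hub], hvR, hvb⟩
    · have hvR : v ∈ R := hc huR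
      have hvb := endpt v u (by rw [Sym2.eq_swap]; exact hm) hvR
      have hub : u ≠ b := fun h => huv (h.trans hvb.symm)
      exact ⟨u, by rw [hvb, Sym2.eq_swap], huR, hub⟩
  obtain ⟨z1, he1, hz1R, hz1b⟩ := norm x1 y1 ⟨x1, y1, rfl, hd1, hall1⟩ c1
  obtain ⟨z2, he2, hz2R, hz2b⟩ := norm x2 y2 ⟨x2, y2, rfl, hd2, hall2⟩ c2
  have hm1 : s(b, z1) ∈ UR G R b := he1 ▸ (⟨x1, y1, rfl, hd1, hall1⟩ : s(x1,y1) ∈ UR G R b)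
  have hm2 : s(b, z2) ∈ UR G R b := he2 ▸ (⟨x2, y2, rfl, hd2, hall2⟩ : s(x2,y2) ∈ UR G R b)
  have hz12 : z1 ≠ z2 := by
    intro h
    subst h
    exact hpq (he1.trans he2.symm)
  rw [mem_UR_iff] at hm1 hm2
  have hall12 : ∀ t ∈ R, t ≠ b → G.dist t z1 = G.dist t z2 := by
    intro t ht htb
    have h1 := hm1.2 t ht htb
    have h2 := hm2.2 t ht htb
    rw [← h1, ← h2]
  exact ⟨z1, z2, key z1 z2 hz12 hall12, hz1R, hz2R⟩
end
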